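/- arXiv:0711.2712 — 3 statements merged into one kernel-verified Lean document; each statement's English description precedes it below -/
import Mathlib

section
/- Let X0, X1, X2, Y2, Y3 be random variables such that X1 – (X2, Y2) – Y3 and X0 – (X1, X2, Y3) – Y2 are Markov chains. Then I((X0, X1) ; (Y2, Y3) | X2) = I(X1 ; Y2 | X2) + I(X0 ; Y3 | (X1, X2)). -/
open MeasureTheory ProbabilityTheory

/-- Shannon entropy of a random variable `X` with values in a finite space,
with respect to the measure `μ`. -/
noncomputable def entropy {Ω S : Type*} [MeasurableSpace Ω] [MeasurableSpace S] [Fintype S]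
    (μ : Measure Ω) (X : Ω → S) : ℝ :=
  ∑ x : S, Real.negMulLog ((μ.map X) {x}).toReal

/-- Shannon conditional entropy `H(X | Y)` (as in `ProbabilityTheory.condEntropy`). -/
noncomputable def condEntropy {Ω S T : Type*} [MeasurableSpace Ω] [MeasurableSpace S]
    [MeasurableSpace T] [Fintype S] [Fintype T] (μ : Measure Ω) (X : Ω → S) (Y : Ω → T) : ℝ :=
  entropy μ (fun ω => (X ω, Y ω)) - entropy μ Y

/-- Conditional mutual information `I(X ; Y | Z)` (as in
`ProbabilityTheory.condMutualInfo`). -/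
noncomputable def condMutualInfo {Ω S T U : Type*} [MeasurableSpace Ω] [MeasurableSpace S]
    [MeasurableSpace T] [MeasurableSpace U] [Fintype S] [Fintype T] [Fintype U]
    (μ : Measure Ω) (X : Ω → S) (Y : Ω → T) (Z : Ω → U) : ℝ :=
  condEntropy μ X Z + condEntropy μ Y Z - condEntropy μ (fun ω => (X ω, Y ω)) Z

open Real Finset

-- Pure finite-sum chain rule identity
lemma sum_negMulLog_chain {α β γ : Type*} [Fintype α] [Fintype β] [Fintype γ]
    (q : α → β → γ → ℝ) (hq : ∀ a b w, 0 ≤ q a b w)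
    (hprod : ∀ a b w, q a b w * (∑ a', ∑ b', q a' b' w)
      = (∑ b', q a b' w) * (∑ a', q a' b w)) :
    (∑ a, ∑ w, negMulLog (∑ b, q a b w)) + (∑ b, ∑ w, negMulLog (∑ a, q a b w))
      = (∑ a, ∑ b, ∑ w, negMulLog (q a b w)) + ∑ w, negMulLog (∑ a, ∑ b, q a b w) := by
  have key : ∀ a b w,
      q a b w * log (∑ b', q a b' w) + q a b w * log (∑ a', q a' b w)
        = q a b w * log (q a b w) + q a b w * log (∑ a', ∑ b', q a' b' w) := by
    intro a b w
    rcases eq_or_lt_of_le (hq a b w) with h0 | hpos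
    · simp [← h0]
    · have hA : 0 < ∑ b', q a b' w :=
        lt_of_lt_of_le hpos (Finset.single_le_sum (fun b' _ => hq a b' w) (mem_univ b))
      have hB : 0 < ∑ a', q a' b w :=
        lt_of_lt_of_le hpos (Finset.single_le_sum (fun a' _ => hq a' b w) (mem_univ a))
      have hW : 0 < ∑ a', ∑ b', q a' b' w := by
        refine lt_of_lt_of_le hA ?_
        exact Finset.single_le_sum
          (fun a' _ => Finset.sum_nonneg (fun b' _ => hq a' b' w)) (mem_univ a)
      rw [← mul_add, ← mul_add, ← Real.log_mul hA.ne' hB.ne',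
        ← Real.log_mul hpos.ne' hW.ne', hprod a b w]
  -- rewrite each entropy-like term
  have e1 : ∀ (a : α) (w : γ), negMulLog (∑ b, q a b w)
      = -∑ b, q a b w * log (∑ b', q a b' w) := by
    intro a w; rw [negMulLog, neg_mul, ← Finset.sum_mul]
  have e2 : ∀ (b : β) (w : γ), negMulLog (∑ a, q a b w)
      = -∑ a, q a b w * log (∑ a', q a' b w) := by
    intro b w; rw [negMulLog, neg_mul, ← Finset.sum_mul]
  have e4 : ∀ (w : γ), negMulLog (∑ a, ∑ b, q a b w)
      = -∑ a, ∑ b, q a b w * log (∑ a', ∑ b', q a' b' w) := by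
    intro w
    rw [negMulLog, neg_mul, neg_inj, Finset.sum_mul]
    refine Finset.sum_congr rfl fun a _ => ?_
    rw [Finset.sum_mul]
  have e3 : ∀ (a : α) (b : β) (w : γ), negMulLog (q a b w)
      = -(q a b w * log (q a b w)) := fun a b w => by rw [negMulLog, neg_mul]
  have main : (∑ a, ∑ b, ∑ w, q a b w * log (∑ b', q a b' w))
      + (∑ a, ∑ b, ∑ w, q a b w * log (∑ a', q a' b w))
      = (∑ a, ∑ b, ∑ w, q a b w * log (q a b w))
      + (∑ a, ∑ b, ∑ w, q a b w * log (∑ a', ∑ b', q a' b' w)) := by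
    rw [← Finset.sum_add_distrib, ← Finset.sum_add_distrib]
    refine Finset.sum_congr rfl fun a _ => ?_
    rw [← Finset.sum_add_distrib, ← Finset.sum_add_distrib]
    refine Finset.sum_congr rfl fun b _ => ?_
    rw [← Finset.sum_add_distrib, ← Finset.sum_add_distrib]
    exact Finset.sum_congr rfl fun w _ => key a b w
  have r1 : (∑ a, ∑ w, ∑ b, q a b w * log (∑ b', q a b' w))
      = ∑ a, ∑ b, ∑ w, q a b w * log (∑ b', q a b' w) :=
    Finset.sum_congr rfl fun a _ => Finset.sum_comm
  have r2 : (∑ b, ∑ w, ∑ a, q a b w * log (∑ a', q a' b w))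
      = ∑ a, ∑ b, ∑ w, q a b w * log (∑ a', q a' b w) := by
    rw [show (∑ b, ∑ w, ∑ a, q a b w * log (∑ a', q a' b w))
        = ∑ b, ∑ a, ∑ w, q a b w * log (∑ a', q a' b w) from
      Finset.sum_congr rfl fun b _ => Finset.sum_comm]
    exact Finset.sum_comm
  have r4 : (∑ w, ∑ a, ∑ b, q a b w * log (∑ a', ∑ b', q a' b' w))
      = ∑ a, ∑ b, ∑ w, q a b w * log (∑ a', ∑ b', q a' b' w) := by
    rw [show (∑ w, ∑ a, ∑ b, q a b w * log (∑ a', ∑ b', q a' b' w))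
        = ∑ a, ∑ w, ∑ b, q a b w * log (∑ a', ∑ b', q a' b' w) from Finset.sum_comm]
    exact Finset.sum_congr rfl fun a _ => Finset.sum_comm
  simp only [e1, e2, e3, e4, Finset.sum_neg_distrib]
  linarith [main, r1, r2, r4]

lemma entropy_comp_inj {Ω S T : Type*} [MeasurableSpace Ω]
    [MeasurableSpace S] [Fintype S] [DiscreteMeasurableSpace S]
    [MeasurableSpace T] [Fintype T] [DiscreteMeasurableSpace T]
    (μ : Measure Ω) (X : Ω → S) (hX : Measurable X) (σ : S → T)
    (hσ : Function.Injective σ) :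
    entropy μ (fun ω => σ (X ω)) = entropy μ X := by
  classical
  unfold entropy
  have hmap : μ.map (fun ω => σ (X ω)) = (μ.map X).map σ := by
    rw [Measure.map_map Measurable.of_discrete hX]; rfl
  rw [hmap]
  have hval : ∀ t : T, ((μ.map X).map σ) {t} = μ.map X (σ ⁻¹' {t}) :=
    fun t => Measure.map_apply Measurable.of_discrete (measurableSet_singleton t)
  simp only [hval]
  have hpre : ∀ x : S, σ ⁻¹' {σ x} = {x} := by
    intro x; ext y; simp [hσ.eq_iff]
  calc ∑ t : T, Real.negMulLog ((μ.map X) (σ ⁻¹' {t})).toReal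
      = ∑ t ∈ Finset.univ.image σ, Real.negMulLog ((μ.map X) (σ ⁻¹' {t})).toReal := by
        refine (Finset.sum_subset (Finset.subset_univ _) ?_).symm
        intro t _ ht
        have : σ ⁻¹' {t} = ∅ := by
          ext x; simp only [Set.mem_preimage, Set.mem_singleton_iff,
            Set.mem_empty_iff_false, iff_false]
          rintro rfl
          exact ht (Finset.mem_image.mpr ⟨x, Finset.mem_univ x, rfl⟩)
        simp [this]
    _ = ∑ x : S, Real.negMulLog ((μ.map X) (σ ⁻¹' {σ x})).toReal :=
        Finset.sum_image (fun x _ y _ h => hσ h)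
    _ = ∑ x : S, Real.negMulLog ((μ.map X) {x}).toReal := by
        simp only [hpre]

lemma markov_entropy {Ω α β γ : Type*} [mΩ : MeasurableSpace Ω] [StandardBorelSpace Ω]
    [MeasurableSpace α] [Fintype α] [DiscreteMeasurableSpace α]
    [MeasurableSpace β] [Fintype β] [DiscreteMeasurableSpace β]
    [MeasurableSpace γ] [Fintype γ] [DiscreteMeasurableSpace γ]
    (μ : Measure Ω) [IsProbabilityMeasure μ]
    (f : Ω → α) (g : Ω → β) (W : Ω → γ)
    (hf : Measurable f) (hg : Measurable g) (hW : Measurable W)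
    (hle : MeasurableSpace.comap W inferInstance ≤ mΩ)
    (h : CondIndepFun (MeasurableSpace.comap W inferInstance) hle f g μ) :
    entropy μ (fun ω => (f ω, W ω)) + entropy μ (fun ω => (g ω, W ω))
      = entropy μ (fun ω => ((f ω, g ω), W ω)) + entropy μ W := by
  classical
  -- condexps w.r.t. the comap σ-algebra are constant on fibers of W
  have const_on : ∀ (φ : Ω → ℝ),
      StronglyMeasurable[MeasurableSpace.comap W inferInstance] φ →
      ∀ ω ω', W ω = W ω' → φ ω = φ ω' := by
    intro φ hφ ω ω' hww
    obtain ⟨u, -, hu⟩ := hφ.measurable (measurableSet_singleton (φ ω))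
    have hω : ω ∈ W ⁻¹' u := by rw [hu]; exact rfl
    have hω' : ω' ∈ W ⁻¹' u := by
      simpa [Set.mem_preimage, ← hww] using hω
    have : ω' ∈ φ ⁻¹' {φ ω} := hu ▸ hω'
    exact (this : φ ω' = φ ω).symm
  -- the product formula
  have hprod : ∀ (a : α) (b : β) (w : γ),
      (μ (f ⁻¹' {a} ∩ g ⁻¹' {b} ∩ W ⁻¹' {w})).toReal * (μ (W ⁻¹' {w})).toReal
        = (μ (f ⁻¹' {a} ∩ W ⁻¹' {w})).toReal * (μ (g ⁻¹' {b} ∩ W ⁻¹' {w})).toReal := by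
    intro a b w
    have hsm : MeasurableSet (W ⁻¹' {w}) := hW (measurableSet_singleton w)
    have hs' : MeasurableSet[MeasurableSpace.comap W inferInstance] (W ⁻¹' {w}) :=
      ⟨{w}, measurableSet_singleton w, rfl⟩
    by_cases hμs : μ (W ⁻¹' {w}) = 0
    · have h1 : μ (f ⁻¹' {a} ∩ g ⁻¹' {b} ∩ W ⁻¹' {w}) = 0 :=
        measure_mono_null Set.inter_subset_right hμs
      have h2 : μ (f ⁻¹' {a} ∩ W ⁻¹' {w}) = 0 :=
        measure_mono_null Set.inter_subset_right hμs
      simp [h1, h2]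
    · have int_eq : ∀ (D : Set Ω), MeasurableSet D →
          ∫ x in W ⁻¹' {w}, (μ⟦D | MeasurableSpace.comap W inferInstance⟧) x ∂μ
            = (μ (D ∩ W ⁻¹' {w})).toReal := by
        intro D hD
        have hint : Integrable (D.indicator (fun _ => (1:ℝ))) μ :=
          (integrable_const (1:ℝ)).indicator hD
        rw [setIntegral_condExp hle hint hs', setIntegral_indicator hD]
        simp [Measure.restrict_apply hD, Set.inter_comm, Measure.real]
      have hch := (condIndepFun_iff_condExp_inter_preimage_eq_mul hf hg).mp h {a} {b}
        (MeasurableSet.of_discrete) (MeasurableSet.of_discrete)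
      have hch' := ae_restrict_of_ae (s := W ⁻¹' {w}) hch
      obtain ⟨ω₀, hω₀s, hω₀⟩ :=
        MeasureTheory.Measure.exists_mem_of_measure_ne_zero_of_ae hμs hch'
      have const_int : ∀ (D : Set Ω), MeasurableSet D →
          (μ (D ∩ W ⁻¹' {w})).toReal
            = (μ⟦D | MeasurableSpace.comap W inferInstance⟧) ω₀ * (μ (W ⁻¹' {w})).toReal := by
        intro D hD
        rw [← int_eq D hD]
        rw [setIntegral_congr_fun hsm (fun x hx =>
          const_on _ stronglyMeasurable_condExp x ω₀ (by
            have h1 : W x = w := hx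
            have h2 : W ω₀ = w := hω₀s
            rw [h1, h2]))]
        rw [setIntegral_const]
        simp [mul_comm, Measure.real]
      have hA := const_int (f ⁻¹' {a}) (hf (measurableSet_singleton a))
      have hB := const_int (g ⁻¹' {b}) (hg (measurableSet_singleton b))
      have hAB := const_int (f ⁻¹' {a} ∩ g ⁻¹' {b})
        ((hf (measurableSet_singleton a)).inter (hg (measurableSet_singleton b)))
      rw [hAB, hA, hB, hω₀]
      ring
  -- marginalization identities
  have inter_meas : ∀ (a : α) (b : β) (w : γ),
      MeasurableSet (f ⁻¹' {a} ∩ g ⁻¹' {b} ∩ W ⁻¹' {w}) := fun a b w =>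
    ((hf (measurableSet_singleton a)).inter (hg (measurableSet_singleton b))).inter
      (hW (measurableSet_singleton w))
  have mA : ∀ (a : α) (w : γ), (μ (f ⁻¹' {a} ∩ W ⁻¹' {w})).toReal
      = ∑ b, (μ (f ⁻¹' {a} ∩ g ⁻¹' {b} ∩ W ⁻¹' {w})).toReal := by
    intro a w
    have hset : f ⁻¹' {a} ∩ W ⁻¹' {w}
        = ⋃ b, f ⁻¹' {a} ∩ g ⁻¹' {b} ∩ W ⁻¹' {w} := by
      ext ω
      simp only [Set.mem_inter_iff, Set.mem_preimage, Set.mem_singleton_iff, Set.mem_iUnion]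
      exact ⟨fun ⟨h1, h2⟩ => ⟨g ω, ⟨h1, rfl⟩, h2⟩, fun ⟨b, ⟨h1, _⟩, h2⟩ => ⟨h1, h2⟩⟩
    have hdis : Pairwise (Function.onFun Disjoint fun b => f ⁻¹' {a} ∩ g ⁻¹' {b} ∩ W ⁻¹' {w}) := by
      intro b b' hne
      simp only [Function.onFun, Set.disjoint_left]
      rintro ω ⟨⟨-, h1⟩, -⟩ ⟨⟨-, h2⟩, -⟩
      exact hne ((Set.mem_singleton_iff.mp h1) ▸ (Set.mem_singleton_iff.mp h2) ▸ rfl : b = b')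
    have h2 := measure_iUnion (μ := μ) hdis (fun b => inter_meas a b w)
    rw [← hset] at h2
    rw [h2, tsum_fintype]
    exact ENNReal.toReal_sum fun b _ => measure_ne_top μ _
  have mB : ∀ (b : β) (w : γ), (μ (g ⁻¹' {b} ∩ W ⁻¹' {w})).toReal
      = ∑ a, (μ (f ⁻¹' {a} ∩ g ⁻¹' {b} ∩ W ⁻¹' {w})).toReal := by
    intro b w
    have hset : g ⁻¹' {b} ∩ W ⁻¹' {w}
        = ⋃ a, f ⁻¹' {a} ∩ g ⁻¹' {b} ∩ W ⁻¹' {w} := by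
      ext ω
      simp only [Set.mem_inter_iff, Set.mem_preimage, Set.mem_singleton_iff, Set.mem_iUnion]
      exact ⟨fun ⟨h1, h2⟩ => ⟨f ω, ⟨rfl, h1⟩, h2⟩, fun ⟨a, ⟨_, h1⟩, h2⟩ => ⟨h1, h2⟩⟩
    have hdis : Pairwise (Function.onFun Disjoint fun a => f ⁻¹' {a} ∩ g ⁻¹' {b} ∩ W ⁻¹' {w}) := by
      intro a a' hne
      simp only [Function.onFun, Set.disjoint_left]
      rintro ω ⟨⟨h1, -⟩, -⟩ ⟨⟨h2, -⟩, -⟩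
      exact hne ((Set.mem_singleton_iff.mp h1) ▸ (Set.mem_singleton_iff.mp h2) ▸ rfl : a = a')
    have h2 := measure_iUnion (μ := μ) hdis (fun a => inter_meas a b w)
    rw [← hset] at h2
    rw [h2, tsum_fintype]
    exact ENNReal.toReal_sum fun a _ => measure_ne_top μ _
  have mW : ∀ (w : γ), (μ (W ⁻¹' {w})).toReal
      = ∑ a, ∑ b, (μ (f ⁻¹' {a} ∩ g ⁻¹' {b} ∩ W ⁻¹' {w})).toReal := by
    intro w
    have hset : W ⁻¹' {w} = ⋃ a, f ⁻¹' {a} ∩ W ⁻¹' {w} := by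
      ext ω
      simp only [Set.mem_inter_iff, Set.mem_preimage, Set.mem_singleton_iff, Set.mem_iUnion]
      exact ⟨fun h => ⟨f ω, rfl, h⟩, fun ⟨a, _, h⟩ => h⟩
    have hdis : Pairwise (Function.onFun Disjoint fun a => f ⁻¹' {a} ∩ W ⁻¹' {w}) := by
      intro a a' hne
      simp only [Function.onFun, Set.disjoint_left]
      rintro ω ⟨h1, -⟩ ⟨h2, -⟩
      exact hne ((Set.mem_singleton_iff.mp h1) ▸ (Set.mem_singleton_iff.mp h2) ▸ rfl : a = a')
    have h2 := measure_iUnion (μ := μ) hdis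
      (fun a => (hf (measurableSet_singleton a)).inter (hW (measurableSet_singleton w)))
    rw [← hset] at h2
    rw [h2, tsum_fintype, ENNReal.toReal_sum fun a _ => measure_ne_top μ _]
    exact Finset.sum_congr rfl fun a _ => mA a w
  -- entropies as explicit sums
  have ent_fW : entropy μ (fun ω => (f ω, W ω))
      = ∑ a, ∑ w, negMulLog ((μ (f ⁻¹' {a} ∩ W ⁻¹' {w})).toReal) := by
    unfold entropy
    rw [Fintype.sum_prod_type]
    refine Finset.sum_congr rfl fun a _ => Finset.sum_congr rfl fun w _ => ?_
    rw [Measure.map_apply (hf.prodMk hW) (measurableSet_singleton _),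
      show (fun ω => (f ω, W ω)) ⁻¹' {(a, w)} = f ⁻¹' {a} ∩ W ⁻¹' {w} from by
        ext ω; simp [Prod.ext_iff]]
  have ent_gW : entropy μ (fun ω => (g ω, W ω))
      = ∑ b, ∑ w, negMulLog ((μ (g ⁻¹' {b} ∩ W ⁻¹' {w})).toReal) := by
    unfold entropy
    rw [Fintype.sum_prod_type]
    refine Finset.sum_congr rfl fun b _ => Finset.sum_congr rfl fun w _ => ?_
    rw [Measure.map_apply (hg.prodMk hW) (measurableSet_singleton _),
      show (fun ω => (g ω, W ω)) ⁻¹' {(b, w)} = g ⁻¹' {b} ∩ W ⁻¹' {w} from by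
        ext ω; simp [Prod.ext_iff]]
  have ent_fgW : entropy μ (fun ω => ((f ω, g ω), W ω))
      = ∑ a, ∑ b, ∑ w, negMulLog ((μ (f ⁻¹' {a} ∩ g ⁻¹' {b} ∩ W ⁻¹' {w})).toReal) := by
    unfold entropy
    rw [Fintype.sum_prod_type, Fintype.sum_prod_type]
    refine Finset.sum_congr rfl fun a _ => Finset.sum_congr rfl fun b _ =>
      Finset.sum_congr rfl fun w _ => ?_
    rw [Measure.map_apply ((hf.prodMk hg).prodMk hW) (measurableSet_singleton _),
      show (fun ω => ((f ω, g ω), W ω)) ⁻¹' {((a, b), w)}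
          = f ⁻¹' {a} ∩ g ⁻¹' {b} ∩ W ⁻¹' {w} from by
        ext ω; simp [Prod.ext_iff, Set.mem_inter_iff]]
  have ent_W : entropy μ W = ∑ w, negMulLog ((μ (W ⁻¹' {w})).toReal) := by
    unfold entropy
    exact Finset.sum_congr rfl fun w _ => by
      rw [Measure.map_apply hW (measurableSet_singleton _)]
  rw [ent_fW, ent_gW, ent_fgW, ent_W]
  simp only [mA, mB, mW]
  exact sum_negMulLog_chain (fun a b w => (μ (f ⁻¹' {a} ∩ g ⁻¹' {b} ∩ W ⁻¹' {w})).toReal)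
    (fun _ _ _ => ENNReal.toReal_nonneg)
    (fun a b w => by rw [← mA a w, ← mB b w, ← mW w]; exact hprod a b w)

/-- If `X1 – (X2, Y2) – Y3` and `X0 – (X1, X2, Y3) – Y2` are Markov chains, then
`I((X0, X1) ; (Y2, Y3) | X2) = I(X1 ; Y2 | X2) + I(X0 ; Y3 | (X1, X2))`. -/
theorem cutset_reduction_protocolB
    {Ω S0 S1 S2 T2 T3 : Type*}
    [MeasurableSpace Ω] [StandardBorelSpace Ω]
    [MeasurableSpace S0] [Fintype S0] [Nonempty S0] [DiscreteMeasurableSpace S0]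
    [MeasurableSpace S1] [Fintype S1] [Nonempty S1] [DiscreteMeasurableSpace S1]
    [MeasurableSpace S2] [Fintype S2] [Nonempty S2] [DiscreteMeasurableSpace S2]
    [MeasurableSpace T2] [Fintype T2] [Nonempty T2] [DiscreteMeasurableSpace T2]
    [MeasurableSpace T3] [Fintype T3] [Nonempty T3] [DiscreteMeasurableSpace T3]
    (μ : Measure Ω) [IsProbabilityMeasure μ]
    (X0 : Ω → S0) (X1 : Ω → S1) (X2 : Ω → S2)
    (Y2 : Ω → T2) (Y3 : Ω → T3)
    (hX0 : Measurable X0) (hX1 : Measurable X1) (hX2 : Measurable X2)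
    (hY2 : Measurable Y2) (hY3 : Measurable Y3)
    (hMarkov1 : CondIndepFun
      (MeasurableSpace.comap (fun ω => (X2 ω, Y2 ω)) inferInstance)
      ((hX2.prodMk hY2).comap_le)
      X1 Y3 μ)
    (hMarkov2 : CondIndepFun
      (MeasurableSpace.comap (fun ω => (X1 ω, X2 ω, Y3 ω)) inferInstance)
      ((hX1.prodMk (hX2.prodMk hY3)).comap_le)
      X0 Y2 μ) :
    condMutualInfo μ (fun ω => (X0 ω, X1 ω)) (fun ω => (Y2 ω, Y3 ω)) X2
      = condMutualInfo μ X1 Y2 X2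
        + condMutualInfo μ X0 Y3 (fun ω => (X1 ω, X2 ω)) := by
  have E1 : entropy μ (fun ω => (X1 ω, (X2 ω, Y2 ω)))
        + entropy μ (fun ω => (Y3 ω, (X2 ω, Y2 ω)))
      = entropy μ (fun ω => ((X1 ω, Y3 ω), (X2 ω, Y2 ω)))
        + entropy μ (fun ω => (X2 ω, Y2 ω)) :=
    markov_entropy μ X1 Y3 (fun ω => (X2 ω, Y2 ω)) hX1 hY3 (hX2.prodMk hY2)
      ((hX2.prodMk hY2).comap_le) hMarkov1
  have E2 : entropy μ (fun ω => (X0 ω, (X1 ω, (X2 ω, Y3 ω))))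
        + entropy μ (fun ω => (Y2 ω, (X1 ω, (X2 ω, Y3 ω))))
      = entropy μ (fun ω => ((X0 ω, Y2 ω), (X1 ω, (X2 ω, Y3 ω))))
        + entropy μ (fun ω => (X1 ω, (X2 ω, Y3 ω))) :=
    markov_entropy μ X0 Y2 (fun ω => (X1 ω, (X2 ω, Y3 ω))) hX0 hY2
      (hX1.prodMk (hX2.prodMk hY3)) ((hX1.prodMk (hX2.prodMk hY3)).comap_le) hMarkov2
  have c1 : entropy μ (fun ω => ((X0 ω, X1 ω), X2 ω))
      = entropy μ (fun ω => (X0 ω, (X1 ω, X2 ω))) :=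
    entropy_comp_inj μ (fun ω => (X0 ω, (X1 ω, X2 ω)))
      (hX0.prodMk (hX1.prodMk hX2))
      (fun p => ((p.1, p.2.1), p.2.2))
      (by intro p q h; simp only [Prod.ext_iff] at h ⊢; tauto)
  have c2 : entropy μ (fun ω => ((Y2 ω, Y3 ω), X2 ω))
      = entropy μ (fun ω => (Y3 ω, (X2 ω, Y2 ω))) :=
    entropy_comp_inj μ (fun ω => (Y3 ω, (X2 ω, Y2 ω)))
      (hY3.prodMk (hX2.prodMk hY2))
      (fun p => ((p.2.2, p.1), p.2.1))
      (by intro p q h; simp only [Prod.ext_iff] at h ⊢; tauto)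
  have c3 : entropy μ (fun ω => (((X0 ω, X1 ω), (Y2 ω, Y3 ω)), X2 ω))
      = entropy μ (fun ω => ((X0 ω, Y2 ω), (X1 ω, (X2 ω, Y3 ω)))) :=
    entropy_comp_inj μ (fun ω => ((X0 ω, Y2 ω), (X1 ω, (X2 ω, Y3 ω))))
      ((hX0.prodMk hY2).prodMk (hX1.prodMk (hX2.prodMk hY3)))
      (fun p => (((p.1.1, p.2.1), (p.1.2, p.2.2.2)), p.2.2.1))
      (by intro p q h; simp only [Prod.ext_iff] at h ⊢; tauto)
  have c4 : entropy μ (fun ω => (Y2 ω, X2 ω))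
      = entropy μ (fun ω => (X2 ω, Y2 ω)) :=
    entropy_comp_inj μ (fun ω => (X2 ω, Y2 ω)) (hX2.prodMk hY2)
      (fun p => (p.2, p.1))
      (by intro p q h; simp only [Prod.ext_iff] at h ⊢; tauto)
  have c5 : entropy μ (fun ω => ((X1 ω, Y2 ω), X2 ω))
      = entropy μ (fun ω => (X1 ω, (X2 ω, Y2 ω))) :=
    entropy_comp_inj μ (fun ω => (X1 ω, (X2 ω, Y2 ω)))
      (hX1.prodMk (hX2.prodMk hY2))
      (fun p => ((p.1, p.2.2), p.2.1))
      (by intro p q h; simp only [Prod.ext_iff] at h ⊢; tauto)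
  have c6 : entropy μ (fun ω => (Y3 ω, (X1 ω, X2 ω)))
      = entropy μ (fun ω => (X1 ω, (X2 ω, Y3 ω))) :=
    entropy_comp_inj μ (fun ω => (X1 ω, (X2 ω, Y3 ω)))
      (hX1.prodMk (hX2.prodMk hY3))
      (fun p => (p.2.2, (p.1, p.2.1)))
      (by intro p q h; simp only [Prod.ext_iff] at h ⊢; tauto)
  have c7 : entropy μ (fun ω => ((X0 ω, Y3 ω), (X1 ω, X2 ω)))
      = entropy μ (fun ω => (X0 ω, (X1 ω, (X2 ω, Y3 ω)))) :=
    entropy_comp_inj μ (fun ω => (X0 ω, (X1 ω, (X2 ω, Y3 ω))))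
      (hX0.prodMk (hX1.prodMk (hX2.prodMk hY3)))
      (fun p => ((p.1, p.2.2.2), (p.2.1, p.2.2.1)))
      (by intro p q h; simp only [Prod.ext_iff] at h ⊢; tauto)
  have c8 : entropy μ (fun ω => ((X1 ω, Y3 ω), (X2 ω, Y2 ω)))
      = entropy μ (fun ω => (Y2 ω, (X1 ω, (X2 ω, Y3 ω)))) :=
    entropy_comp_inj μ (fun ω => (Y2 ω, (X1 ω, (X2 ω, Y3 ω))))
      (hY2.prodMk (hX1.prodMk (hX2.prodMk hY3)))
      (fun p => ((p.2.1, p.2.2.2), (p.2.2.1, p.1)))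
      (by intro p q h; simp only [Prod.ext_iff] at h ⊢; tauto)
  rw [c8] at E1
  simp only [condMutualInfo, condEntropy]
  rw [c1, c2, c3, c4, c5, c6, c7]
  linarith [E1, E2]
end

section
/- Let K ≥ 2 be a natural number, let X_0, …, X_K and Y_1, …, Y_{K+1} be random variables, and fix k with 1 ≤ k ≤ K − 1. Write X_i^j for the tuple (X_i, X_{i+1}, …, X_j) and Y_i^j for the tuple (Y_i, …, Y_j). If X_k – (Y_{k+1}, X_{k+1}^K) – Y_{k+2}^{K+1} and X_0^{k−1} – (Y_{K+1}, X_k^K) – Y_{k+1}^K are Markov chains, then I(X_0^k ; Y_{k+1}^{K+1} | X_{k+1}^K) = I(X_k ; Y_{k+1} | X_{k+1}^K) + I(X_0^{k−1} ; Y_{K+1} | X_k^K). -/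
open MeasureTheory ProbabilityTheory

/-- The tuple `(X_a, X_{a+1}, …, X_b)` of a family of random variables, viewed as a single
random variable with values in the (finite) product space `∀ l : Set.Icc a b, S l`. -/
abbrev tuple {Ω : Type*} {S : ℕ → Type*} (X : ∀ i, Ω → S i) (a b : ℕ) :
    Ω → ∀ l : Set.Icc a b, S l := fun ω l => X l ω


section EntropyLemmas

open Real

private lemma entropy_comp_inj_s3 {Ω A B : Type*} [MeasurableSpace Ω]
    [MeasurableSpace A] [Fintype A] [MeasurableSingletonClass A]
    [MeasurableSpace B] [Fintype B] [MeasurableSingletonClass B]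
    (μ : Measure Ω) (W : Ω → A) (e : A → B) (hW : Measurable W)
    (heW : Measurable (fun ω => e (W ω))) (he : Function.Injective e) :
    entropy μ (fun ω => e (W ω)) = entropy μ W := by
  classical
  unfold entropy
  have hzero : ∀ b : B, b ∉ Finset.image e Finset.univ →
      Real.negMulLog ((μ.map (fun ω => e (W ω))) {b}).toReal = 0 := by
    intro b hb
    have h0 : (μ.map (fun ω => e (W ω))) {b} = 0 := by
      rw [Measure.map_apply heW (MeasurableSet.singleton b)]
      have hemp : (fun ω => e (W ω)) ⁻¹' {b} = ∅ := by
        ext ω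
        simp only [Set.mem_preimage, Set.mem_singleton_iff, Set.mem_empty_iff_false, iff_false]
        intro h
        exact hb (Finset.mem_image.mpr ⟨W ω, Finset.mem_univ _, h⟩)
      rw [hemp]; simp
    rw [h0]; simp [Real.negMulLog]
  rw [← Finset.sum_subset (Finset.subset_univ (Finset.image e Finset.univ))
    (fun b _ hb => hzero b hb)]
  rw [Finset.sum_image (fun x _ y _ h => he h)]
  apply Finset.sum_congr rfl
  intro a _
  have hpre : (fun ω => e (W ω)) ⁻¹' {e a} = W ⁻¹' {a} := by
    ext ω; simp [he.eq_iff]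
  rw [Measure.map_apply heW (MeasurableSet.singleton _),
    Measure.map_apply hW (MeasurableSet.singleton _), hpre]

private lemma entropy_eq_of_mutual {Ω A B : Type*} [MeasurableSpace Ω]
    [MeasurableSpace A] [Fintype A] [MeasurableSingletonClass A]
    [MeasurableSpace B] [Fintype B] [MeasurableSingletonClass B]
    (μ : Measure Ω) (U : Ω → A) (V : Ω → B) (hU : Measurable U) (hV : Measurable V)
    (σ : A → B) (τ : B → A) (hσ : ∀ ω, σ (U ω) = V ω) (hτ : ∀ ω, τ (V ω) = U ω) :
    entropy μ U = entropy μ V := by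
  have hpair : Measurable (fun ω => (U ω, V ω)) := hU.prodMk hV
  have hfU : (fun ω => ((U ω, σ (U ω)) : A × B)) = fun ω => (U ω, V ω) :=
    funext fun ω => by rw [hσ ω]
  have hfV : (fun ω => ((τ (V ω), V ω) : A × B)) = fun ω => (U ω, V ω) :=
    funext fun ω => by rw [hτ ω]
  have h1 : entropy μ (fun ω => ((U ω, σ (U ω)) : A × B)) = entropy μ U :=
    entropy_comp_inj_s3 μ U (fun a => (a, σ a)) hU (hfU ▸ hpair)
      (fun a a' h => congrArg Prod.fst h)
  have h2 : entropy μ (fun ω => ((τ (V ω), V ω) : A × B)) = entropy μ V :=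
    entropy_comp_inj_s3 μ V (fun b => (τ b, b)) hV (hfV ▸ hpair)
      (fun b b' h => congrArg Prod.snd h)
  rw [← h1, ← h2, hfU, hfV]

private lemma condexp_const_on_fiber {Ω C : Type*} [MeasurableSpace Ω] [MeasurableSpace C]
    (ζ : Ω → C) (φ : Ω → ℝ)
    (hφ : Measurable[MeasurableSpace.comap ζ inferInstance] φ)
    {ω ω' : Ω} (h : ζ ω = ζ ω') : φ ω = φ ω' := by
  obtain ⟨B, _, hBeq⟩ := hφ (MeasurableSet.singleton (φ ω))
  have hω : ω ∈ ζ ⁻¹' B := by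
    rw [hBeq]; exact Set.mem_singleton _
  have hω' : ω' ∈ ζ ⁻¹' B := by
    simp only [Set.mem_preimage] at hω ⊢; rwa [← h]
  rw [hBeq] at hω'
  exact hω'.symm

private lemma condIndep_factorization {Ω A B C : Type*} [mΩ : MeasurableSpace Ω]
    [StandardBorelSpace Ω]
    [MeasurableSpace A] [MeasurableSingletonClass A]
    [MeasurableSpace B] [MeasurableSingletonClass B]
    [MeasurableSpace C] [MeasurableSingletonClass C]
    (μ : Measure Ω) [IsProbabilityMeasure μ]
    (f : Ω → A) (g : Ω → B) (ζ : Ω → C)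
    (hf : Measurable f) (hg : Measurable g) (hζ : Measurable ζ)
    {hm' : MeasurableSpace.comap ζ inferInstance ≤ mΩ}
    (h : CondIndepFun (MeasurableSpace.comap ζ inferInstance) hm' f g μ)
    (a : A) (b : B) (c : C) :
    (μ (f ⁻¹' {a} ∩ g ⁻¹' {b} ∩ ζ ⁻¹' {c})).toReal * (μ (ζ ⁻¹' {c})).toReal
      = (μ (f ⁻¹' {a} ∩ ζ ⁻¹' {c})).toReal * (μ (g ⁻¹' {b} ∩ ζ ⁻¹' {c})).toReal := by
  classical
  have hSm : MeasurableSet[MeasurableSpace.comap ζ inferInstance] (ζ ⁻¹' {c}) :=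
    ⟨{c}, MeasurableSet.singleton c, rfl⟩
  have hSm0 : MeasurableSet (ζ ⁻¹' {c}) := hζ (MeasurableSet.singleton c)
  by_cases hzero : μ (ζ ⁻¹' {c}) = 0
  · have h1 : μ (f ⁻¹' {a} ∩ g ⁻¹' {b} ∩ ζ ⁻¹' {c}) = 0 :=
      measure_mono_null Set.inter_subset_right hzero
    have h2 : μ (f ⁻¹' {a} ∩ ζ ⁻¹' {c}) = 0 := measure_mono_null Set.inter_subset_right hzero
    rw [h1, h2, hzero]; simp
  · obtain ⟨ω₀, hω₀⟩ : (ζ ⁻¹' {c}).Nonempty := Set.nonempty_iff_ne_empty.mpr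
      (fun hemp => hzero (by rw [hemp]; simp))
    have key : ∀ (E : Set Ω), MeasurableSet E →
        ∫ ω in ζ ⁻¹' {c},
            (μ[E.indicator (fun _ => (1:ℝ)) | MeasurableSpace.comap ζ inferInstance]) ω ∂μ
          = (μ (E ∩ ζ ⁻¹' {c})).toReal := by
      intro E hE
      rw [setIntegral_condExp hm' ((integrable_const (1:ℝ)).indicator hE) hSm,
        setIntegral_indicator hE, setIntegral_const, Set.inter_comm]
      simp [Measure.real]
    have hconst : ∀ (E : Set Ω), ∀ ω ∈ ζ ⁻¹' {c},
        (μ[E.indicator (fun _ => (1:ℝ)) | MeasurableSpace.comap ζ inferInstance]) ω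
          = (μ[E.indicator (fun _ => (1:ℝ)) | MeasurableSpace.comap ζ inferInstance]) ω₀ := by
      intro E ω hω
      refine condexp_const_on_fiber ζ _ (stronglyMeasurable_condExp.measurable) ?_
      rw [Set.mem_preimage, Set.mem_singleton_iff] at hω hω₀
      rw [hω, hω₀]
    have hval : ∀ (E : Set Ω), MeasurableSet E →
        (μ[E.indicator (fun _ => (1:ℝ)) | MeasurableSpace.comap ζ inferInstance]) ω₀
          * (μ (ζ ⁻¹' {c})).toReal = (μ (E ∩ ζ ⁻¹' {c})).toReal := by
      intro E hE
      have h1 := key E hE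
      have h2 : ∫ ω in ζ ⁻¹' {c},
            (μ[E.indicator (fun _ => (1:ℝ)) | MeasurableSpace.comap ζ inferInstance]) ω ∂μ
          = ∫ _ω in ζ ⁻¹' {c},
            (μ[E.indicator (fun _ => (1:ℝ)) | MeasurableSpace.comap ζ inferInstance]) ω₀ ∂μ :=
        setIntegral_congr_ae hSm0 (Filter.Eventually.of_forall (fun ω hω => hconst E ω hω))
      rw [h2, setIntegral_const, smul_eq_mul] at h1
      simp only [Measure.real] at h1
      linarith [h1]
    have hiff := (condIndepFun_iff_condExp_inter_preimage_eq_mul hf hg).mp h {a} {b}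
      (MeasurableSet.singleton a) (MeasurableSet.singleton b)
    have hFG : MeasurableSet (f ⁻¹' {a} ∩ g ⁻¹' {b}) :=
      (hf (MeasurableSet.singleton a)).inter (hg (MeasurableSet.singleton b))
    have hint : (μ (f ⁻¹' {a} ∩ g ⁻¹' {b} ∩ ζ ⁻¹' {c})).toReal
        = (μ[(f ⁻¹' {a}).indicator (fun _ => (1:ℝ)) | MeasurableSpace.comap ζ inferInstance]) ω₀
          * (μ[(g ⁻¹' {b}).indicator (fun _ => (1:ℝ)) | MeasurableSpace.comap ζ inferInstance]) ω₀
          * (μ (ζ ⁻¹' {c})).toReal := by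
      have h1 := key _ hFG
      have h2 : ∫ ω in ζ ⁻¹' {c},
            (μ[(f ⁻¹' {a} ∩ g ⁻¹' {b}).indicator (fun _ => (1:ℝ)) |
              MeasurableSpace.comap ζ inferInstance]) ω ∂μ
          = ∫ ω in ζ ⁻¹' {c},
            ((μ[(f ⁻¹' {a}).indicator (fun _ => (1:ℝ)) |
                MeasurableSpace.comap ζ inferInstance]) ω
            * (μ[(g ⁻¹' {b}).indicator (fun _ => (1:ℝ)) |
                MeasurableSpace.comap ζ inferInstance]) ω) ∂μ :=
        setIntegral_congr_ae hSm0 (hiff.mono (fun ω hω _ => hω))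
      have h3 : ∫ ω in ζ ⁻¹' {c},
            ((μ[(f ⁻¹' {a}).indicator (fun _ => (1:ℝ)) |
                MeasurableSpace.comap ζ inferInstance]) ω
            * (μ[(g ⁻¹' {b}).indicator (fun _ => (1:ℝ)) |
                MeasurableSpace.comap ζ inferInstance]) ω) ∂μ
          = ∫ _ω in ζ ⁻¹' {c},
            ((μ[(f ⁻¹' {a}).indicator (fun _ => (1:ℝ)) |
                MeasurableSpace.comap ζ inferInstance]) ω₀
            * (μ[(g ⁻¹' {b}).indicator (fun _ => (1:ℝ)) |
                MeasurableSpace.comap ζ inferInstance]) ω₀) ∂μ :=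
        setIntegral_congr_ae hSm0 (Filter.Eventually.of_forall
          (fun ω hω => by rw [hconst _ ω hω, hconst _ ω hω]))
      rw [h2, h3, setIntegral_const, smul_eq_mul] at h1
      simp only [Measure.real] at h1
      rw [← h1]; ring
    have hFv := hval _ (hf (MeasurableSet.singleton a))
    have hGv := hval _ (hg (MeasurableSet.singleton b))
    rw [hint, ← hFv, ← hGv]
    ring

private lemma negMulLog_fac {p q r s : ℝ} (hp : 0 ≤ p) (hpq : p ≤ q) (hpr : p ≤ r) (hps : p ≤ s)
    (h : p * s = q * r) :
    Real.negMulLog p = -(p * Real.log q) - (p * Real.log r) + p * Real.log s := by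
  rcases eq_or_lt_of_le hp with h0 | h0
  · simp [← h0, Real.negMulLog]
  · have hq : 0 < q := lt_of_lt_of_le h0 hpq
    have hr : 0 < r := lt_of_lt_of_le h0 hpr
    have hs : 0 < s := lt_of_lt_of_le h0 hps
    have hprs : p = q * r / s := by field_simp; linarith
    have hlog : Real.log p = Real.log q + Real.log r - Real.log s := by
      rw [hprs, Real.log_div (by positivity) hs.ne', Real.log_mul hq.ne' hr.ne']
    rw [Real.negMulLog, hlog]; ring

private lemma toReal_measure_iUnion_fintype {Ω : Type*} [MeasurableSpace Ω] (μ : Measure Ω)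
    [IsFiniteMeasure μ] {B : Type*} [Fintype B] (A : B → Set Ω)
    (hmeas : ∀ b, MeasurableSet (A b)) (hdis : Pairwise (Function.onFun Disjoint A)) :
    (μ (⋃ b, A b)).toReal = ∑ b, (μ (A b)).toReal := by
  rw [measure_iUnion hdis hmeas, tsum_fintype]
  exact ENNReal.toReal_sum (fun b _ => measure_ne_top μ _)

private lemma entropy_condIndep {Ω A B C : Type*} [MeasurableSpace Ω]
    [MeasurableSpace A] [Fintype A] [MeasurableSingletonClass A]
    [MeasurableSpace B] [Fintype B] [MeasurableSingletonClass B]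
    [MeasurableSpace C] [Fintype C] [MeasurableSingletonClass C]
    (μ : Measure Ω) [IsProbabilityMeasure μ]
    (f : Ω → A) (g : Ω → B) (ζ : Ω → C)
    (hf : Measurable f) (hg : Measurable g) (hζ : Measurable ζ)
    (hfac : ∀ a b c, (μ (f ⁻¹' {a} ∩ g ⁻¹' {b} ∩ ζ ⁻¹' {c})).toReal * (μ (ζ ⁻¹' {c})).toReal
      = (μ (f ⁻¹' {a} ∩ ζ ⁻¹' {c})).toReal * (μ (g ⁻¹' {b} ∩ ζ ⁻¹' {c})).toReal) :
    entropy μ (fun ω => ((f ω, g ω), ζ ω)) + entropy μ ζ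
      = entropy μ (fun ω => (f ω, ζ ω)) + entropy μ (fun ω => (g ω, ζ ω)) := by
  classical
  set p3 : A → B → C → ℝ := fun a b c => (μ (f ⁻¹' {a} ∩ g ⁻¹' {b} ∩ ζ ⁻¹' {c})).toReal with hp3
  set pf : A → C → ℝ := fun a c => (μ (f ⁻¹' {a} ∩ ζ ⁻¹' {c})).toReal with hpf
  set pg : B → C → ℝ := fun b c => (μ (g ⁻¹' {b} ∩ ζ ⁻¹' {c})).toReal with hpg
  set p1 : C → ℝ := fun c => (μ (ζ ⁻¹' {c})).toReal with hp1
  have hmeas3 : Measurable (fun ω => ((f ω, g ω), ζ ω)) := (hf.prodMk hg).prodMk hζ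
  have hmeasf : Measurable (fun ω => (f ω, ζ ω)) := hf.prodMk hζ
  have hmeasg : Measurable (fun ω => (g ω, ζ ω)) := hg.prodMk hζ
  have hmap3 : ∀ a b c, ((μ.map (fun ω => ((f ω, g ω), ζ ω))) {((a, b), c)}).toReal
      = p3 a b c := by
    intro a b c
    rw [Measure.map_apply hmeas3 (MeasurableSet.singleton _)]
    congr 2
    ext ω
    simp [Prod.ext_iff, and_assoc]
  have hmapf : ∀ a c, ((μ.map (fun ω => (f ω, ζ ω))) {(a, c)}).toReal = pf a c := by
    intro a c
    rw [Measure.map_apply hmeasf (MeasurableSet.singleton _)]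
    congr 2
    ext ω
    simp [Prod.ext_iff]
  have hmapg : ∀ b c, ((μ.map (fun ω => (g ω, ζ ω))) {(b, c)}).toReal = pg b c := by
    intro b c
    rw [Measure.map_apply hmeasg (MeasurableSet.singleton _)]
    congr 2
    ext ω
    simp [Prod.ext_iff]
  have hmap1 : ∀ c, ((μ.map ζ) {c}).toReal = p1 c := by
    intro c
    rw [Measure.map_apply hζ (MeasurableSet.singleton _)]
  have hmargf : ∀ a c, ∑ b, p3 a b c = pf a c := by
    intro a c
    have hset : f ⁻¹' {a} ∩ ζ ⁻¹' {c} = ⋃ b, (f ⁻¹' {a} ∩ g ⁻¹' {b} ∩ ζ ⁻¹' {c}) := by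
      ext ω
      simp only [Set.mem_inter_iff, Set.mem_preimage, Set.mem_singleton_iff, Set.mem_iUnion]
      constructor
      · rintro ⟨h1, h2⟩; exact ⟨g ω, ⟨h1, rfl⟩, h2⟩
      · rintro ⟨b, ⟨h1, _⟩, h2⟩; exact ⟨h1, h2⟩
    rw [hpf]
    simp only
    rw [hset, toReal_measure_iUnion_fintype μ _
      (fun b => ((hf (MeasurableSet.singleton a)).inter (hg (MeasurableSet.singleton b))).inter
        (hζ (MeasurableSet.singleton c)))
      (fun b b' hbb' => Set.disjoint_left.mpr (fun ω hω hω' => hbb' (hω.1.2.symm.trans hω'.1.2)))]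
  have hmargg : ∀ b c, ∑ a, p3 a b c = pg b c := by
    intro b c
    have hset : g ⁻¹' {b} ∩ ζ ⁻¹' {c} = ⋃ a, (f ⁻¹' {a} ∩ g ⁻¹' {b} ∩ ζ ⁻¹' {c}) := by
      ext ω
      simp only [Set.mem_inter_iff, Set.mem_preimage, Set.mem_singleton_iff, Set.mem_iUnion]
      constructor
      · rintro ⟨h1, h2⟩; exact ⟨f ω, ⟨rfl, h1⟩, h2⟩
      · rintro ⟨a, ⟨_, h1⟩, h2⟩; exact ⟨h1, h2⟩
    rw [hpg]
    simp only
    rw [hset, toReal_measure_iUnion_fintype μ _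
      (fun a => ((hf (MeasurableSet.singleton a)).inter (hg (MeasurableSet.singleton b))).inter
        (hζ (MeasurableSet.singleton c)))
      (fun a a' haa' => Set.disjoint_left.mpr (fun ω hω hω' => haa' (hω.1.1.symm.trans hω'.1.1)))]
  have hmarg1 : ∀ c, ∑ a, pf a c = p1 c := by
    intro c
    have hset : ζ ⁻¹' {c} = ⋃ a, (f ⁻¹' {a} ∩ ζ ⁻¹' {c}) := by
      ext ω
      simp only [Set.mem_preimage, Set.mem_singleton_iff, Set.mem_iUnion, Set.mem_inter_iff]
      constructor
      · intro h1; exact ⟨f ω, rfl, h1⟩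
      · rintro ⟨a, _, h1⟩; exact h1
    rw [hp1]
    simp only
    rw [hset, toReal_measure_iUnion_fintype μ _
      (fun a => (hf (MeasurableSet.singleton a)).inter (hζ (MeasurableSet.singleton c)))
      (fun a a' haa' => Set.disjoint_left.mpr (fun ω hω hω' => haa' (hω.1.symm.trans hω'.1)))]
  have hp3nn : ∀ a b c, 0 ≤ p3 a b c := fun a b c => ENNReal.toReal_nonneg
  have hmono : ∀ {s t : Set Ω}, s ⊆ t → (μ s).toReal ≤ (μ t).toReal := fun hst =>
    ENNReal.toReal_mono (measure_ne_top μ _) (measure_mono hst)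
  have hpoint : ∀ a b c, Real.negMulLog (p3 a b c)
      = -(p3 a b c * Real.log (pf a c)) - (p3 a b c * Real.log (pg b c))
        + p3 a b c * Real.log (p1 c) := by
    intro a b c
    refine negMulLog_fac (hp3nn a b c) ?_ ?_ ?_ (hfac a b c)
    · exact hmono (fun ω hω => ⟨hω.1.1, hω.2⟩)
    · exact hmono (fun ω hω => ⟨hω.1.2, hω.2⟩)
    · exact hmono Set.inter_subset_right
  have e3 : entropy μ (fun ω => ((f ω, g ω), ζ ω))
      = ∑ a, ∑ b, ∑ c, Real.negMulLog (p3 a b c) := by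
    unfold entropy
    simp only [Fintype.sum_prod_type]
    exact Finset.sum_congr rfl fun a _ => Finset.sum_congr rfl fun b _ =>
      Finset.sum_congr rfl fun c _ => by rw [hmap3]
  have ef : entropy μ (fun ω => (f ω, ζ ω)) = ∑ a, ∑ c, Real.negMulLog (pf a c) := by
    unfold entropy
    simp only [Fintype.sum_prod_type]
    exact Finset.sum_congr rfl fun a _ => Finset.sum_congr rfl fun c _ => by rw [hmapf]
  have eg : entropy μ (fun ω => (g ω, ζ ω)) = ∑ b, ∑ c, Real.negMulLog (pg b c) := by
    unfold entropy
    simp only [Fintype.sum_prod_type]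
    exact Finset.sum_congr rfl fun b _ => Finset.sum_congr rfl fun c _ => by rw [hmapg]
  have e1 : entropy μ ζ = ∑ c, Real.negMulLog (p1 c) := by
    unfold entropy
    exact Finset.sum_congr rfl fun c _ => by rw [hmap1]
  rw [e3, ef, eg, e1]
  have step1 : ∑ a, ∑ b, ∑ c, Real.negMulLog (p3 a b c)
      = ∑ a, ∑ b, ∑ c, (-(p3 a b c * Real.log (pf a c)) - (p3 a b c * Real.log (pg b c))
          + p3 a b c * Real.log (p1 c)) :=
    Finset.sum_congr rfl fun a _ => Finset.sum_congr rfl fun b _ =>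
      Finset.sum_congr rfl fun c _ => hpoint a b c
  have t1 : ∑ a, ∑ b, ∑ c, -(p3 a b c * Real.log (pf a c))
      = ∑ a, ∑ c, -(pf a c * Real.log (pf a c)) := by
    refine Finset.sum_congr rfl fun a _ => ?_
    rw [Finset.sum_comm]
    refine Finset.sum_congr rfl fun c _ => ?_
    rw [Finset.sum_neg_distrib, ← Finset.sum_mul, hmargf a c]
  have t2 : ∑ a, ∑ b, ∑ c, (p3 a b c * Real.log (pg b c))
      = ∑ b, ∑ c, (pg b c * Real.log (pg b c)) := by
    rw [Finset.sum_comm]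
    refine Finset.sum_congr rfl fun b _ => ?_
    rw [Finset.sum_comm]
    refine Finset.sum_congr rfl fun c _ => ?_
    rw [← Finset.sum_mul, hmargg b c]
  have t3 : ∑ a, ∑ b, ∑ c, (p3 a b c * Real.log (p1 c))
      = ∑ c, (p1 c * Real.log (p1 c)) := by
    have h1 : ∀ a, ∑ b, ∑ c, (p3 a b c * Real.log (p1 c))
        = ∑ c, (pf a c * Real.log (p1 c)) := by
      intro a
      rw [Finset.sum_comm]
      exact Finset.sum_congr rfl fun c _ => by rw [← Finset.sum_mul, hmargf a c]
    rw [Finset.sum_congr rfl fun a _ => h1 a, Finset.sum_comm]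
    exact Finset.sum_congr rfl fun c _ => by rw [← Finset.sum_mul, hmarg1 c]
  have nf : ∑ a, ∑ c, Real.negMulLog (pf a c) = ∑ a, ∑ c, -(pf a c * Real.log (pf a c)) :=
    Finset.sum_congr rfl fun a _ => Finset.sum_congr rfl fun c _ => by
      unfold Real.negMulLog; ring
  have ng : ∑ b, ∑ c, Real.negMulLog (pg b c) = ∑ b, ∑ c, -(pg b c * Real.log (pg b c)) :=
    Finset.sum_congr rfl fun b _ => Finset.sum_congr rfl fun c _ => by
      unfold Real.negMulLog; ring
  have n1 : ∑ c, Real.negMulLog (p1 c) = ∑ c, -(p1 c * Real.log (p1 c)) :=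
    Finset.sum_congr rfl fun c _ => by unfold Real.negMulLog; ring
  rw [step1, nf, ng, n1]
  simp only [Finset.sum_add_distrib, Finset.sum_sub_distrib, Finset.sum_neg_distrib]
  rw [t2, t3]
  simp only [Finset.sum_neg_distrib] at t1
  linarith [t1]

end EntropyLemmas

section GlueLemmas

variable {Z : ℕ → Type*}

private def restrictI {a b a' b' : ℕ} (h : ∀ l : ℕ, a' ≤ l ∧ l ≤ b' → a ≤ l ∧ l ≤ b)
    (u : ∀ l : Set.Icc a b, Z l) : ∀ l : Set.Icc a' b', Z l :=
  fun l => u ⟨l.1, Set.mem_Icc.mpr (h l.1 (Set.mem_Icc.mp l.2))⟩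

private def glueI {a b a' b' c d : ℕ}
    (hd : ∀ l : ℕ, c ≤ l ∧ l ≤ d → ¬(a ≤ l ∧ l ≤ b) → a' ≤ l ∧ l ≤ b')
    (u : ∀ l : Set.Icc a b, Z l) (v : ∀ l : Set.Icc a' b', Z l) : ∀ l : Set.Icc c d, Z l :=
  fun l => if h : a ≤ l.1 ∧ l.1 ≤ b then u ⟨l.1, Set.mem_Icc.mpr h⟩
    else v ⟨l.1, Set.mem_Icc.mpr (hd l.1 (Set.mem_Icc.mp l.2) h)⟩

private def glueSingI {a b j c d : ℕ}
    (hd : ∀ l : ℕ, c ≤ l ∧ l ≤ d → ¬(a ≤ l ∧ l ≤ b) → l = j)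
    (u : ∀ l : Set.Icc a b, Z l) (t : Z j) : ∀ l : Set.Icc c d, Z l :=
  fun l => if h : a ≤ l.1 ∧ l.1 ≤ b then u ⟨l.1, Set.mem_Icc.mpr h⟩
    else cast (congrArg Z (hd l.1 (Set.mem_Icc.mp l.2) h).symm) t

variable {Ω : Type*} (X : ∀ i, Ω → Z i)

private lemma tuple_cast {m j : ℕ} (h : m = j) (ω : Ω) :
    cast (congrArg Z h.symm) (X j ω) = X m ω := by subst h; rfl

private lemma restrictI_tuple {a b a' b' : ℕ} (h : ∀ l : ℕ, a' ≤ l ∧ l ≤ b' → a ≤ l ∧ l ≤ b)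
    (ω : Ω) : restrictI (Z := Z) h (tuple X a b ω) = tuple X a' b' ω := rfl

private lemma glueI_tuple {a b a' b' c d : ℕ}
    (hd : ∀ l : ℕ, c ≤ l ∧ l ≤ d → ¬(a ≤ l ∧ l ≤ b) → a' ≤ l ∧ l ≤ b') (ω : Ω) :
    glueI (Z := Z) hd (tuple X a b ω) (tuple X a' b' ω) = tuple X c d ω := by
  funext l
  unfold glueI
  split <;> rfl

private lemma glueSingI_tuple {a b j c d : ℕ}
    (hd : ∀ l : ℕ, c ≤ l ∧ l ≤ d → ¬(a ≤ l ∧ l ≤ b) → l = j) (ω : Ω) :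
    glueSingI (Z := Z) hd (tuple X a b ω) (X j ω) = tuple X c d ω := by
  funext l
  unfold glueSingI
  split
  · rfl
  · rename_i h
    exact tuple_cast X (hd l.1 (Set.mem_Icc.mp l.2) h) ω

end GlueLemmas

/-- Converse step of Theorem 2 (short-range relays): for `1 ≤ k ≤ K - 1`, if
`X_k – (Y_{k+1}, X_{k+1}^K) – Y_{k+2}^{K+1}` and `X_0^{k-1} – (Y_{K+1}, X_k^K) – Y_{k+1}^K`
are Markov chains, then
`I(X_0^k ; Y_{k+1}^{K+1} | X_{k+1}^K) = I(X_k ; Y_{k+1} | X_{k+1}^K) + I(X_0^{k-1} ; Y_{K+1} | X_k^K)`. -/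
theorem cutset_reduction_short_range
    {Ω : Type*} [MeasurableSpace Ω] [StandardBorelSpace Ω]
    {S T : ℕ → Type*}
    [∀ i, MeasurableSpace (S i)] [∀ i, Fintype (S i)] [∀ i, Nonempty (S i)]
    [∀ i, DiscreteMeasurableSpace (S i)]
    [∀ i, MeasurableSpace (T i)] [∀ i, Fintype (T i)] [∀ i, Nonempty (T i)]
    [∀ i, DiscreteMeasurableSpace (T i)]
    (μ : Measure Ω) [IsProbabilityMeasure μ]
    (K k : ℕ) (hK : 2 ≤ K) (hk1 : 1 ≤ k) (hk2 : k ≤ K - 1)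
    (X : ∀ i, Ω → S i) (Y : ∀ i, Ω → T i)
    (hX : ∀ i, Measurable (X i)) (hY : ∀ i, Measurable (Y i))
    (hMarkov1 : CondIndepFun
      (MeasurableSpace.comap
        (fun ω => (Y (k + 1) ω, tuple X (k + 1) K ω)) inferInstance)
      (Measurable.comap_le (show Measurable (fun ω => (Y (k + 1) ω, tuple X (k + 1) K ω)) from
        (hY (k + 1)).prodMk (measurable_pi_lambda _ (fun l => hX l))))
      (X k) (tuple Y (k + 2) (K + 1)) μ)
    (hMarkov2 : CondIndepFun
      (MeasurableSpace.comap
        (fun ω => (Y (K + 1) ω, tuple X k K ω)) inferInstance)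
      (Measurable.comap_le (show Measurable (fun ω => (Y (K + 1) ω, tuple X k K ω)) from
        (hY (K + 1)).prodMk (measurable_pi_lambda _ (fun l => hX l))))
      (tuple X 0 (k - 1)) (tuple Y (k + 1) K) μ) :
    condMutualInfo μ (tuple X 0 k) (tuple Y (k + 1) (K + 1)) (tuple X (k + 1) K)
      = condMutualInfo μ (X k) (Y (k + 1)) (tuple X (k + 1) K)
        + condMutualInfo μ (tuple X 0 (k - 1)) (Y (K + 1)) (tuple X k K) := by
  classical
  have hTX : ∀ a b : ℕ, Measurable (tuple X a b) :=
    fun a b => measurable_pi_lambda _ (fun l => hX l)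
  have hTY : ∀ a b : ℕ, Measurable (tuple Y a b) :=
    fun a b => measurable_pi_lambda _ (fun l => hY l)
  -- the two factorizations coming from the Markov conditions
  have hF1 : entropy μ (fun ω => ((X k ω, tuple Y (k+2) (K+1) ω),
        (Y (k+1) ω, tuple X (k+1) K ω)))
      + entropy μ (fun ω => (Y (k+1) ω, tuple X (k+1) K ω))
      = entropy μ (fun ω => (X k ω, (Y (k+1) ω, tuple X (k+1) K ω)))
        + entropy μ (fun ω => (tuple Y (k+2) (K+1) ω, (Y (k+1) ω, tuple X (k+1) K ω))) := by
    refine entropy_condIndep μ (X k) (tuple Y (k+2) (K+1))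
      (fun ω => (Y (k+1) ω, tuple X (k+1) K ω)) (hX k) (hTY _ _)
      ((hY (k+1)).prodMk (hTX _ _)) ?_
    exact condIndep_factorization μ _ _ _ (hX k) (hTY _ _)
      ((hY (k+1)).prodMk (hTX _ _)) hMarkov1
  have hF2 : entropy μ (fun ω => ((tuple X 0 (k-1) ω, tuple Y (k+1) K ω),
        (Y (K+1) ω, tuple X k K ω)))
      + entropy μ (fun ω => (Y (K+1) ω, tuple X k K ω))
      = entropy μ (fun ω => (tuple X 0 (k-1) ω, (Y (K+1) ω, tuple X k K ω)))
        + entropy μ (fun ω => (tuple Y (k+1) K ω, (Y (K+1) ω, tuple X k K ω))) := by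
    refine entropy_condIndep μ (tuple X 0 (k-1)) (tuple Y (k+1) K)
      (fun ω => (Y (K+1) ω, tuple X k K ω)) (hTX _ _) (hTY _ _)
      ((hY (K+1)).prodMk (hTX _ _)) ?_
    exact condIndep_factorization μ _ _ _ (hTX _ _) (hTY _ _)
      ((hY (K+1)).prodMk (hTX _ _)) hMarkov2
  -- (a)
  have ea : entropy μ (fun ω => (tuple X 0 k ω, tuple X (k+1) K ω))
      = entropy μ (fun ω => (tuple X 0 (k-1) ω, tuple X k K ω)) := by
    refine entropy_eq_of_mutual μ _ _ ((hTX 0 k).prodMk (hTX (k+1) K))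
      ((hTX 0 (k-1)).prodMk (hTX k K))
      (fun p => (restrictI (fun l h => by omega) p.1,
        glueI (a := 0) (b := k) (fun l h1 h2 => by omega) p.1 p.2))
      (fun p => (glueI (a := 0) (b := k-1) (fun l h1 h2 => by omega) p.1 p.2,
        restrictI (fun l h => by omega) p.2))
      (fun ω => Prod.ext
        (restrictI_tuple X (a := 0) (b := k) (a' := 0) (b' := k-1) (fun l h => by omega) ω)
        (glueI_tuple X (a := 0) (b := k) (a' := k+1) (b' := K) (c := k) (d := K)
          (fun l h1 h2 => by omega) ω))
      (fun ω => Prod.ext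
        (glueI_tuple X (a := 0) (b := k-1) (a' := k) (b' := K) (c := 0) (d := k)
          (fun l h1 h2 => by omega) ω)
        (restrictI_tuple X (a := k) (b := K) (a' := k+1) (b' := K) (fun l h => by omega) ω))
  -- (b)
  have eb : entropy μ (fun ω => (tuple Y (k+1) (K+1) ω, tuple X (k+1) K ω))
      = entropy μ (fun ω => (tuple Y (k+2) (K+1) ω, (Y (k+1) ω, tuple X (k+1) K ω))) := by
    refine entropy_eq_of_mutual μ _ _ ((hTY (k+1) (K+1)).prodMk (hTX (k+1) K))
      ((hTY (k+2) (K+1)).prodMk ((hY (k+1)).prodMk (hTX (k+1) K)))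
      (fun p => (restrictI (fun l h => by omega) p.1,
        (p.1 ⟨k+1, Set.mem_Icc.mpr (by omega)⟩, p.2)))
      (fun p => (glueSingI (a := k+2) (b := K+1) (fun l h1 h2 => by omega) p.1 p.2.1, p.2.2))
      (fun ω => Prod.ext
        (restrictI_tuple Y (a := k+1) (b := K+1) (a' := k+2) (b' := K+1)
          (fun l h => by omega) ω) rfl)
      (fun ω => Prod.ext
        (glueSingI_tuple Y (a := k+2) (b := K+1) (j := k+1) (c := k+1) (d := K+1)
          (fun l h1 h2 => by omega) ω) rfl)
  -- (c)
  have ec : entropy μ (fun ω => ((tuple X 0 k ω, tuple Y (k+1) (K+1) ω), tuple X (k+1) K ω))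
      = entropy μ (fun ω => ((tuple X 0 (k-1) ω, tuple Y (k+1) K ω),
          (Y (K+1) ω, tuple X k K ω))) := by
    refine entropy_eq_of_mutual μ _ _
      (((hTX 0 k).prodMk (hTY (k+1) (K+1))).prodMk (hTX (k+1) K))
      (((hTX 0 (k-1)).prodMk (hTY (k+1) K)).prodMk ((hY (K+1)).prodMk (hTX k K)))
      (fun p => ((restrictI (fun l h => by omega) p.1.1,
          restrictI (fun l h => by omega) p.1.2),
        (p.1.2 ⟨K+1, Set.mem_Icc.mpr (by omega)⟩,
          glueI (a := 0) (b := k) (fun l h1 h2 => by omega) p.1.1 p.2)))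
      (fun p => ((glueI (a := 0) (b := k-1) (fun l h1 h2 => by omega) p.1.1 p.2.2,
          glueSingI (a := k+1) (b := K) (fun l h1 h2 => by omega) p.1.2 p.2.1),
        restrictI (fun l h => by omega) p.2.2))
      (fun ω => Prod.ext (Prod.ext rfl rfl) (Prod.ext rfl
        (glueI_tuple X (a := 0) (b := k) (a' := k+1) (b' := K) (c := k) (d := K)
          (fun l h1 h2 => by omega) ω)))
      (fun ω => Prod.ext (Prod.ext
        (glueI_tuple X (a := 0) (b := k-1) (a' := k) (b' := K) (c := 0) (d := k)
          (fun l h1 h2 => by omega) ω)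
        (glueSingI_tuple Y (a := k+1) (b := K) (j := K+1) (c := k+1) (d := K+1)
          (fun l h1 h2 => by omega) ω)) rfl)
  -- (d)
  have ed : entropy μ (fun ω => ((X k ω, tuple Y (k+2) (K+1) ω),
        (Y (k+1) ω, tuple X (k+1) K ω)))
      = entropy μ (fun ω => (tuple Y (k+1) K ω, (Y (K+1) ω, tuple X k K ω))) := by
    refine entropy_eq_of_mutual μ _ _
      (((hX k).prodMk (hTY (k+2) (K+1))).prodMk ((hY (k+1)).prodMk (hTX (k+1) K)))
      ((hTY (k+1) K).prodMk ((hY (K+1)).prodMk (hTX k K)))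
      (fun p => (glueSingI (a := k+2) (b := K) (fun l h1 h2 => by omega)
          (restrictI (fun l h => by omega) p.1.2) p.2.1,
        (p.1.2 ⟨K+1, Set.mem_Icc.mpr (by omega)⟩,
          glueSingI (a := k+1) (b := K) (fun l h1 h2 => by omega) p.2.2 p.1.1)))
      (fun p => ((p.2.2 ⟨k, Set.mem_Icc.mpr (by omega)⟩,
          glueSingI (a := k+2) (b := K) (fun l h1 h2 => by omega)
            (restrictI (fun l h => by omega) p.1) p.2.1),
        (p.1 ⟨k+1, Set.mem_Icc.mpr (by omega)⟩,
          restrictI (fun l h => by omega) p.2.2)))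
      (fun ω => Prod.ext
        (glueSingI_tuple Y (a := k+2) (b := K) (j := k+1) (c := k+1) (d := K)
          (fun l h1 h2 => by omega) ω)
        (Prod.ext rfl
          (glueSingI_tuple X (a := k+1) (b := K) (j := k) (c := k) (d := K)
            (fun l h1 h2 => by omega) ω)))
      (fun ω => Prod.ext (Prod.ext rfl
        (glueSingI_tuple Y (a := k+2) (b := K) (j := K+1) (c := k+2) (d := K+1)
          (fun l h1 h2 => by omega) ω)) (Prod.ext rfl rfl))
  -- (f)
  have ef2 : entropy μ (fun ω => ((X k ω, Y (k+1) ω), tuple X (k+1) K ω))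
      = entropy μ (fun ω => (X k ω, (Y (k+1) ω, tuple X (k+1) K ω))) := by
    refine entropy_eq_of_mutual μ _ _
      (((hX k).prodMk (hY (k+1))).prodMk (hTX (k+1) K))
      ((hX k).prodMk ((hY (k+1)).prodMk (hTX (k+1) K)))
      (fun p => (p.1.1, (p.1.2, p.2))) (fun p => ((p.1, p.2.1), p.2.2))
      (fun ω => rfl) (fun ω => rfl)
  -- (h)
  have eh : entropy μ (fun ω => ((tuple X 0 (k-1) ω, Y (K+1) ω), tuple X k K ω))
      = entropy μ (fun ω => (tuple X 0 (k-1) ω, (Y (K+1) ω, tuple X k K ω))) := by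
    refine entropy_eq_of_mutual μ _ _
      (((hTX 0 (k-1)).prodMk (hY (K+1))).prodMk (hTX k K))
      ((hTX 0 (k-1)).prodMk ((hY (K+1)).prodMk (hTX k K)))
      (fun p => (p.1.1, (p.1.2, p.2))) (fun p => ((p.1, p.2.1), p.2.2))
      (fun ω => rfl) (fun ω => rfl)
  -- (i)
  have ei : entropy μ (fun ω => (X k ω, tuple X (k+1) K ω)) = entropy μ (tuple X k K) := by
    refine entropy_eq_of_mutual μ _ _ ((hX k).prodMk (hTX (k+1) K)) (hTX k K)
      (fun p => glueSingI (a := k+1) (b := K) (fun l h1 h2 => by omega) p.2 p.1)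
      (fun w => (w ⟨k, Set.mem_Icc.mpr (by omega)⟩, restrictI (fun l h => by omega) w))
      (fun ω => glueSingI_tuple X (a := k+1) (b := K) (j := k) (c := k) (d := K)
        (fun l h1 h2 => by omega) ω) (fun ω => rfl)
  simp only [condMutualInfo, condEntropy]
  linarith [hF1, hF2, ea, eb, ec, ed, ef2, eh, ei]
end

section
/- Let K ≥ 3 be a natural number, let X_0, …, X_K and Y_1, …, Y_{K+1} be random variables, and fix k with 2 ≤ k ≤ K − 1. Write X_i^j for the tuple (X_i, X_{i+1}, …, X_j) and Y_i^j for the tuple (Y_i, …, Y_j). If (X_{k−1}, X_k) – (Y_{k+1}, X_{k+1}^K) – Y_{k+2}^{K+1} and X_0^{k−2} – (Y_{K+1}, X_{k−1}^K) – Y_{k+1}^K are Markov chains, then I(X_0^k ; Y_{k+1}^{K+1} | X_{k+1}^K) = I((X_{k−1}, X_k) ; Y_{k+1} | X_{k+1}^K) + I(X_0^{k−2} ; Y_{K+1} | X_{k−1}^K). -/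
open MeasureTheory ProbabilityTheory

section Aux

variable {Ω : Type*} [MeasurableSpace Ω] {μ : Measure Ω}

lemma entropy_eq_sum_preimage {S : Type*} [MeasurableSpace S] [Fintype S]
    [MeasurableSingletonClass S] (μ : Measure Ω) (X : Ω → S) (hX : Measurable X) :
    entropy μ X = ∑ x : S, Real.negMulLog (μ (X ⁻¹' {x})).toReal := by
  unfold entropy
  refine Finset.sum_congr rfl fun x _ => ?_
  rw [Measure.map_apply hX (measurableSet_singleton x)]

lemma entropy_comp {S T : Type*} [MeasurableSpace S] [Fintype S] [MeasurableSingletonClass S]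
    [MeasurableSpace T] [Fintype T] [MeasurableSingletonClass T]
    (μ : Measure Ω) (X : Ω → S) (hX : Measurable X) (e : S → T)
    (he : Function.Injective e) :
    entropy μ (fun ω => e (X ω)) = entropy μ X := by
  classical
  have heM : Measurable e := Measurable.of_discrete
  have hcomp : Measurable (fun ω => e (X ω)) := heM.comp hX
  rw [entropy_eq_sum_preimage μ _ hcomp, entropy_eq_sum_preimage μ X hX]
  have key : ∀ x : S, (fun ω => e (X ω)) ⁻¹' {e x} = X ⁻¹' {x} := by
    intro x; ext ω
    simp [he.eq_iff]
  calc ∑ t : T, Real.negMulLog (μ ((fun ω => e (X ω)) ⁻¹' {t})).toReal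
      = ∑ t ∈ Finset.univ.image e,
          Real.negMulLog (μ ((fun ω => e (X ω)) ⁻¹' {t})).toReal := by
        refine (Finset.sum_subset (Finset.subset_univ _) fun t _ ht => ?_).symm
        have : (fun ω => e (X ω)) ⁻¹' {t} = ∅ := by
          ext ω
          simp only [Set.mem_preimage, Set.mem_singleton_iff, Set.mem_empty_iff_false, iff_false]
          intro hh
          exact ht (Finset.mem_image.mpr ⟨X ω, Finset.mem_univ _, hh⟩)
        rw [this]
        simp
    _ = ∑ x : S, Real.negMulLog (μ ((fun ω => e (X ω)) ⁻¹' {e x})).toReal :=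
        Finset.sum_image (fun a _ b _ h => he h)
    _ = ∑ x : S, Real.negMulLog (μ (X ⁻¹' {x})).toReal := by
        refine Finset.sum_congr rfl fun x _ => ?_
        rw [key]

lemma entropy_congr_comp {S T : Type*} [MeasurableSpace S] [Fintype S]
    [MeasurableSingletonClass S] [MeasurableSpace T] [Fintype T] [MeasurableSingletonClass T]
    (μ : Measure Ω) (X : Ω → S) (X' : Ω → T) (hX : Measurable X) (e : S → T)
    (he : Function.Injective e) (h : X' = fun ω => e (X ω)) :
    entropy μ X' = entropy μ X := by
  rw [h]; exact entropy_comp μ X hX e he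

lemma pair_preimage {α β : Type*} (A : Ω → α) (B : Ω → β) (a : α) (b : β) :
    (fun ω => (A ω, B ω)) ⁻¹' {(a, b)} = A ⁻¹' {a} ∩ B ⁻¹' {b} := by
  ext ω; simp [Prod.ext_iff]

lemma entropy_pair_eq {α γ : Type*} [MeasurableSpace α] [Fintype α] [MeasurableSingletonClass α]
    [MeasurableSpace γ] [Fintype γ] [MeasurableSingletonClass γ]
    (μ : Measure Ω) (A : Ω → α) (Z : Ω → γ) (hA : Measurable A) (hZ : Measurable Z) :
    entropy μ (fun ω => (A ω, Z ω))
      = ∑ a : α, ∑ z : γ, Real.negMulLog (μ (A ⁻¹' {a} ∩ Z ⁻¹' {z})).toReal := by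
  rw [entropy_eq_sum_preimage μ _ (hA.prodMk hZ), Fintype.sum_prod_type]
  refine Finset.sum_congr rfl fun a _ => Finset.sum_congr rfl fun z _ => ?_
  rw [pair_preimage]

lemma entropy_triple_eq {α β γ : Type*}
    [MeasurableSpace α] [Fintype α] [MeasurableSingletonClass α]
    [MeasurableSpace β] [Fintype β] [MeasurableSingletonClass β]
    [MeasurableSpace γ] [Fintype γ] [MeasurableSingletonClass γ]
    (μ : Measure Ω) (A : Ω → α) (B : Ω → β) (Z : Ω → γ)
    (hA : Measurable A) (hB : Measurable B) (hZ : Measurable Z) :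
    entropy μ (fun ω => ((A ω, B ω), Z ω))
      = ∑ a : α, ∑ b : β, ∑ z : γ,
          Real.negMulLog (μ (A ⁻¹' {a} ∩ B ⁻¹' {b} ∩ Z ⁻¹' {z})).toReal := by
  rw [entropy_eq_sum_preimage μ _ ((hA.prodMk hB).prodMk hZ), Fintype.sum_prod_type,
    Fintype.sum_prod_type]
  refine Finset.sum_congr rfl fun a _ => Finset.sum_congr rfl fun b _ =>
    Finset.sum_congr rfl fun z _ => ?_
  have : (fun ω => ((A ω, B ω), Z ω)) ⁻¹' {((a, b), z)}
      = A ⁻¹' {a} ∩ B ⁻¹' {b} ∩ Z ⁻¹' {z} := by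
    ext ω; simp [Prod.ext_iff, and_assoc]
  rw [this]

lemma condMutualInfo_eq' {α β γ : Type*} [MeasurableSpace α] [Fintype α]
    [MeasurableSpace β] [Fintype β] [MeasurableSpace γ] [Fintype γ]
    (μ : Measure Ω) (A : Ω → α) (B : Ω → β) (Z : Ω → γ) :
    condMutualInfo μ A B Z
      = entropy μ (fun ω => (A ω, Z ω)) + entropy μ (fun ω => (B ω, Z ω))
        - entropy μ (fun ω => ((A ω, B ω), Z ω)) - entropy μ Z := by
  unfold condMutualInfo condEntropy
  ring

section CompLemmas

variable {α α' β β' γ γ' : Type*}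
  [MeasurableSpace α] [Fintype α] [MeasurableSingletonClass α]
  [MeasurableSpace α'] [Fintype α'] [MeasurableSingletonClass α']
  [MeasurableSpace β] [Fintype β] [MeasurableSingletonClass β]
  [MeasurableSpace β'] [Fintype β'] [MeasurableSingletonClass β']
  [MeasurableSpace γ] [Fintype γ] [MeasurableSingletonClass γ]
  [MeasurableSpace γ'] [Fintype γ'] [MeasurableSingletonClass γ']

lemma cmi_comp_fst (μ : Measure Ω) (X : Ω → α) (X' : Ω → α') (Y : Ω → β) (Z : Ω → γ)
    (hX : Measurable X) (hY : Measurable Y) (hZ : Measurable Z)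
    (e : α → α') (he : Function.Injective e) (h : X' = fun ω => e (X ω)) :
    condMutualInfo μ X' Y Z = condMutualInfo μ X Y Z := by
  subst h
  rw [condMutualInfo_eq', condMutualInfo_eq']
  have h1 : entropy μ (fun ω => (e (X ω), Z ω)) = entropy μ (fun ω => (X ω, Z ω)) :=
    entropy_congr_comp μ _ _ (hX.prodMk hZ) (Prod.map e id)
      (he.prodMap Function.injective_id) rfl
  have h2 : entropy μ (fun ω => ((e (X ω), Y ω), Z ω))
      = entropy μ (fun ω => ((X ω, Y ω), Z ω)) :=
    entropy_congr_comp μ _ _ (((hX.prodMk hY).prodMk hZ))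
      (fun p => ((e p.1.1, p.1.2), p.2))
      (by intro p q hpq; simp only [Prod.ext_iff, he.eq_iff] at hpq ⊢; tauto) rfl
  rw [h1, h2]

lemma cmi_comp_snd (μ : Measure Ω) (X : Ω → α) (Y : Ω → β) (Y' : Ω → β') (Z : Ω → γ)
    (hX : Measurable X) (hY : Measurable Y) (hZ : Measurable Z)
    (e : β → β') (he : Function.Injective e) (h : Y' = fun ω => e (Y ω)) :
    condMutualInfo μ X Y' Z = condMutualInfo μ X Y Z := by
  subst h
  rw [condMutualInfo_eq', condMutualInfo_eq']
  have h1 : entropy μ (fun ω => (e (Y ω), Z ω)) = entropy μ (fun ω => (Y ω, Z ω)) :=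
    entropy_congr_comp μ _ _ (hY.prodMk hZ) (Prod.map e id)
      (he.prodMap Function.injective_id) rfl
  have h2 : entropy μ (fun ω => ((X ω, e (Y ω)), Z ω))
      = entropy μ (fun ω => ((X ω, Y ω), Z ω)) :=
    entropy_congr_comp μ _ _ (((hX.prodMk hY).prodMk hZ))
      (fun p => ((p.1.1, e p.1.2), p.2))
      (by intro p q hpq; simp only [Prod.ext_iff, he.eq_iff] at hpq ⊢; tauto) rfl
  rw [h1, h2]

lemma cmi_comp_cond (μ : Measure Ω) (X : Ω → α) (Y : Ω → β) (Z : Ω → γ) (Z' : Ω → γ')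
    (hX : Measurable X) (hY : Measurable Y) (hZ : Measurable Z)
    (e : γ → γ') (he : Function.Injective e) (h : Z' = fun ω => e (Z ω)) :
    condMutualInfo μ X Y Z' = condMutualInfo μ X Y Z := by
  subst h
  rw [condMutualInfo_eq', condMutualInfo_eq']
  have h1 : entropy μ (fun ω => (X ω, e (Z ω))) = entropy μ (fun ω => (X ω, Z ω)) :=
    entropy_congr_comp μ _ _ (hX.prodMk hZ) (Prod.map id e)
      (Function.injective_id.prodMap he) rfl
  have h2 : entropy μ (fun ω => (Y ω, e (Z ω))) = entropy μ (fun ω => (Y ω, Z ω)) :=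
    entropy_congr_comp μ _ _ (hY.prodMk hZ) (Prod.map id e)
      (Function.injective_id.prodMap he) rfl
  have h3 : entropy μ (fun ω => ((X ω, Y ω), e (Z ω)))
      = entropy μ (fun ω => ((X ω, Y ω), Z ω)) :=
    entropy_congr_comp μ _ _ ((hX.prodMk hY).prodMk hZ) (Prod.map id e)
      (Function.injective_id.prodMap he) rfl
  have h4 : entropy μ (fun ω => e (Z ω)) = entropy μ Z :=
    entropy_comp μ Z hZ e he
  rw [h1, h2, h3, h4]

lemma cmi_chain_fst (μ : Measure Ω) (A : Ω → α) (B : Ω → β) (Y : Ω → β') (Z : Ω → γ)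
    (hA : Measurable A) (hB : Measurable B) (hY : Measurable Y) (hZ : Measurable Z) :
    condMutualInfo μ (fun ω => (A ω, B ω)) Y Z
      = condMutualInfo μ B Y Z + condMutualInfo μ A Y (fun ω => (B ω, Z ω)) := by
  rw [condMutualInfo_eq', condMutualInfo_eq', condMutualInfo_eq']
  have h1 : entropy μ (fun ω => (A ω, (B ω, Z ω)))
      = entropy μ (fun ω => ((A ω, B ω), Z ω)) :=
    entropy_congr_comp μ _ _ ((hA.prodMk hB).prodMk hZ)
      (fun p => (p.1.1, (p.1.2, p.2)))
      (by intro p q hpq; simp only [Prod.ext_iff] at hpq ⊢; tauto) rfl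
  have h2 : entropy μ (fun ω => (Y ω, (B ω, Z ω)))
      = entropy μ (fun ω => ((B ω, Y ω), Z ω)) :=
    entropy_congr_comp μ _ _ ((hB.prodMk hY).prodMk hZ)
      (fun p => (p.1.2, (p.1.1, p.2)))
      (by intro p q hpq; simp only [Prod.ext_iff] at hpq ⊢; tauto) rfl
  have h3 : entropy μ (fun ω => ((A ω, Y ω), (B ω, Z ω)))
      = entropy μ (fun ω => (((A ω, B ω), Y ω), Z ω)) :=
    entropy_congr_comp μ _ _ ((((hA.prodMk hB).prodMk hY)).prodMk hZ)
      (fun p => ((p.1.1.1, p.1.2), (p.1.1.2, p.2)))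
      (by intro p q hpq; simp only [Prod.ext_iff] at hpq ⊢; tauto) rfl
  rw [h1, h2, h3]
  ring

lemma cmi_chain_snd (μ : Measure Ω) (X : Ω → α) (U : Ω → β) (V : Ω → β') (Z : Ω → γ)
    (hX : Measurable X) (hU : Measurable U) (hV : Measurable V) (hZ : Measurable Z) :
    condMutualInfo μ X (fun ω => (U ω, V ω)) Z
      = condMutualInfo μ X U Z + condMutualInfo μ X V (fun ω => (U ω, Z ω)) := by
  rw [condMutualInfo_eq', condMutualInfo_eq', condMutualInfo_eq']
  have h1 : entropy μ (fun ω => (X ω, (U ω, Z ω)))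
      = entropy μ (fun ω => ((X ω, U ω), Z ω)) :=
    entropy_congr_comp μ _ _ ((hX.prodMk hU).prodMk hZ)
      (fun p => (p.1.1, (p.1.2, p.2)))
      (by intro p q hpq; simp only [Prod.ext_iff] at hpq ⊢; tauto) rfl
  have h2 : entropy μ (fun ω => (V ω, (U ω, Z ω)))
      = entropy μ (fun ω => ((U ω, V ω), Z ω)) :=
    entropy_congr_comp μ _ _ ((hU.prodMk hV).prodMk hZ)
      (fun p => (p.1.2, (p.1.1, p.2)))
      (by intro p q hpq; simp only [Prod.ext_iff] at hpq ⊢; tauto) rfl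
  have h3 : entropy μ (fun ω => ((X ω, V ω), (U ω, Z ω)))
      = entropy μ (fun ω => ((X ω, (U ω, V ω)), Z ω)) :=
    entropy_congr_comp μ _ _ (((hX.prodMk (hU.prodMk hV))).prodMk hZ)
      (fun p => ((p.1.1, p.1.2.2), (p.1.2.1, p.2)))
      (by intro p q hpq; simp only [Prod.ext_iff] at hpq ⊢; tauto) rfl
  rw [h1, h2, h3]
  ring

end CompLemmas

lemma measure_toReal_sum_fiber {κ : Type*} [MeasurableSpace κ] [Fintype κ]
    [MeasurableSingletonClass κ] (μ : Measure Ω) [IsFiniteMeasure μ]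
    (f : Ω → κ) (hf : Measurable f) {u : Set Ω} (hu : MeasurableSet u) :
    (μ u).toReal = ∑ j : κ, (μ (f ⁻¹' {j} ∩ u)).toReal := by
  have hcover : u = ⋃ j : κ, f ⁻¹' {j} ∩ u := by
    ext ω; simp
  have hdisj : Pairwise (Function.onFun Disjoint fun j => f ⁻¹' {j} ∩ u) := by
    intro i j hij
    refine Set.disjoint_left.mpr ?_
    rintro ω ⟨hi, -⟩ ⟨hj, -⟩
    simp only [Set.mem_preimage, Set.mem_singleton_iff] at hi hj
    exact hij (hi.symm.trans hj)
  have := measure_iUnion (μ := μ) hdisj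
    (fun j => (hf (measurableSet_singleton j)).inter hu)
  rw [← hcover] at this
  rw [this, tsum_fintype, ENNReal.toReal_sum (fun j _ => measure_ne_top μ _)]

lemma sum_negMulLog_factorization {α β γ : Type*} [Fintype α] [Fintype β] [Fintype γ]
    (p : α → β → γ → ℝ) (q : α → γ → ℝ) (r : β → γ → ℝ) (s : γ → ℝ)
    (hp : ∀ a b c, 0 ≤ p a b c)
    (hq : ∀ a c, q a c = ∑ b, p a b c)
    (hr : ∀ b c, r b c = ∑ a, p a b c)
    (hs : ∀ c, s c = ∑ a, q a c)
    (hfac : ∀ a b c, p a b c * s c = q a c * r b c) :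
    (∑ a, ∑ c, Real.negMulLog (q a c)) + (∑ b, ∑ c, Real.negMulLog (r b c))
      = (∑ a, ∑ b, ∑ c, Real.negMulLog (p a b c)) + ∑ c, Real.negMulLog (s c) := by
  have hq0 : ∀ a c, 0 ≤ q a c := fun a c => (hq a c) ▸ Finset.sum_nonneg fun b _ => hp a b c
  have hpq : ∀ a b c, p a b c ≤ q a c := fun a b c =>
    (hq a c) ▸ Finset.single_le_sum (fun b _ => hp a b c) (Finset.mem_univ b)
  have hpr : ∀ a b c, p a b c ≤ r b c := fun a b c =>
    (hr b c) ▸ Finset.single_le_sum (fun a _ => hp a b c) (Finset.mem_univ a)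
  have hqs : ∀ a c, q a c ≤ s c := fun a c =>
    (hs c) ▸ Finset.single_le_sum (fun a _ => hq0 a c) (Finset.mem_univ a)
  have hpoint : ∀ a b c, Real.negMulLog (p a b c)
      = (-(p a b c) * Real.log (q a c)) + (-(p a b c) * Real.log (r b c))
        + (p a b c * Real.log (s c)) := by
    intro a b c
    rcases eq_or_lt_of_le (hp a b c) with h0 | h0
    · rw [← h0]; simp
    · have hq' : 0 < q a c := lt_of_lt_of_le h0 (hpq a b c)
      have hr' : 0 < r b c := lt_of_lt_of_le h0 (hpr a b c)
      have hs' : 0 < s c := lt_of_lt_of_le hq' (hqs a c)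
      have hlog : Real.log (p a b c) + Real.log (s c)
          = Real.log (q a c) + Real.log (r b c) := by
        rw [← Real.log_mul (ne_of_gt h0) (ne_of_gt hs'),
          ← Real.log_mul (ne_of_gt hq') (ne_of_gt hr'), hfac]
      have hlp : Real.log (p a b c)
          = Real.log (q a c) + Real.log (r b c) - Real.log (s c) := by linarith
      simp only [Real.negMulLog, hlp]
      ring
  -- rewrite the three marginal sums as triple sums
  have hA : ∀ a, ∑ c, Real.negMulLog (q a c)
      = ∑ b, ∑ c, (-(p a b c) * Real.log (q a c)) := by
    intro a
    calc ∑ c, Real.negMulLog (q a c)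
        = ∑ c, ∑ b, (-(p a b c) * Real.log (q a c)) := by
          refine Finset.sum_congr rfl fun c _ => ?_
          rw [← Finset.sum_mul, Finset.sum_neg_distrib, ← hq a c]
          simp [Real.negMulLog]
      _ = ∑ b, ∑ c, (-(p a b c) * Real.log (q a c)) := Finset.sum_comm
  have hB : (∑ b, ∑ c, Real.negMulLog (r b c))
      = ∑ a, ∑ b, ∑ c, (-(p a b c) * Real.log (r b c)) := by
    have h1 : ∀ b c, Real.negMulLog (r b c) = ∑ a, (-(p a b c) * Real.log (r b c)) := by
      intro b c
      rw [← Finset.sum_mul, Finset.sum_neg_distrib, ← hr b c]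
      simp [Real.negMulLog]
    calc (∑ b, ∑ c, Real.negMulLog (r b c))
        = ∑ b, ∑ c, ∑ a, (-(p a b c) * Real.log (r b c)) := by
          refine Finset.sum_congr rfl fun b _ => Finset.sum_congr rfl fun c _ => h1 b c
      _ = ∑ b, ∑ a, ∑ c, (-(p a b c) * Real.log (r b c)) :=
          Finset.sum_congr rfl fun b _ => Finset.sum_comm
      _ = ∑ a, ∑ b, ∑ c, (-(p a b c) * Real.log (r b c)) := Finset.sum_comm
  have hC : (∑ c, Real.negMulLog (s c))
      = ∑ a, ∑ b, ∑ c, (-(p a b c) * Real.log (s c)) := by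
    have h1 : ∀ c, Real.negMulLog (s c) = ∑ a, ∑ b, (-(p a b c) * Real.log (s c)) := by
      intro c
      have hsum' : ∑ a, ∑ b, p a b c = s c := by
        rw [hs]
        exact Finset.sum_congr rfl fun a _ => (hq a c).symm
      calc Real.negMulLog (s c) = -(s c) * Real.log (s c) := by simp [Real.negMulLog]
        _ = -(∑ a, ∑ b, p a b c) * Real.log (s c) := by rw [hsum']
        _ = ∑ a, (-(∑ b, p a b c) * Real.log (s c)) := by
              rw [← Finset.sum_mul, Finset.sum_neg_distrib]
        _ = ∑ a, ∑ b, (-(p a b c) * Real.log (s c)) := by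
              refine Finset.sum_congr rfl fun a _ => ?_
              rw [← Finset.sum_mul, Finset.sum_neg_distrib]
    calc (∑ c, Real.negMulLog (s c))
        = ∑ c, ∑ a, ∑ b, (-(p a b c) * Real.log (s c)) :=
          Finset.sum_congr rfl fun c _ => h1 c
      _ = ∑ a, ∑ c, ∑ b, (-(p a b c) * Real.log (s c)) := Finset.sum_comm
      _ = ∑ a, ∑ b, ∑ c, (-(p a b c) * Real.log (s c)) :=
          Finset.sum_congr rfl fun a _ => Finset.sum_comm
  have hP : (∑ a, ∑ b, ∑ c, Real.negMulLog (p a b c))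
      = ∑ a, ∑ b, ∑ c, ((-(p a b c) * Real.log (q a c)) + (-(p a b c) * Real.log (r b c))
          + (p a b c * Real.log (s c))) :=
    Finset.sum_congr rfl fun a _ => Finset.sum_congr rfl fun b _ =>
      Finset.sum_congr rfl fun c _ => hpoint a b c
  have hA' : (∑ a, ∑ c, Real.negMulLog (q a c))
      = ∑ a, ∑ b, ∑ c, (-(p a b c) * Real.log (q a c)) :=
    Finset.sum_congr rfl fun a _ => hA a
  rw [hA', hB, hC, hP]
  rw [← Finset.sum_add_distrib, ← Finset.sum_add_distrib]
  refine Finset.sum_congr rfl fun a _ => ?_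
  rw [← Finset.sum_add_distrib, ← Finset.sum_add_distrib]
  refine Finset.sum_congr rfl fun b _ => ?_
  rw [← Finset.sum_add_distrib, ← Finset.sum_add_distrib]
  refine Finset.sum_congr rfl fun c _ => ?_
  ring

end Aux

section CondIndep

lemma cmi_eq_zero_of_condIndep {Ω : Type*} [mΩ : MeasurableSpace Ω] [StandardBorelSpace Ω]
    (μ : Measure Ω) [IsProbabilityMeasure μ]
    {α β γ : Type*} [MeasurableSpace α] [Fintype α] [MeasurableSingletonClass α]
    [MeasurableSpace β] [Fintype β] [MeasurableSingletonClass β]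
    [MeasurableSpace γ] [Fintype γ] [MeasurableSingletonClass γ]
    (A : Ω → α) (B : Ω → β) (Z : Ω → γ)
    (hA : Measurable A) (hB : Measurable B) (hZ : Measurable Z)
    (hle : MeasurableSpace.comap Z inferInstance ≤ mΩ)
    (h : CondIndepFun (MeasurableSpace.comap Z inferInstance) hle A B μ) :
    condMutualInfo μ A B Z = 0 := by
  -- Step 1: the factorization of the joint distribution
  have key : ∀ (a : α) (b : β) (z : γ),
      (μ (A ⁻¹' {a} ∩ B ⁻¹' {b} ∩ Z ⁻¹' {z})).toReal * (μ (Z ⁻¹' {z})).toReal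
        = (μ (A ⁻¹' {a} ∩ Z ⁻¹' {z})).toReal * (μ (B ⁻¹' {b} ∩ Z ⁻¹' {z})).toReal := by
    intro a b z
    set s : Set Ω := A ⁻¹' {a} with hs_def
    set t : Set Ω := B ⁻¹' {b} with ht_def
    set u : Set Ω := Z ⁻¹' {z} with hu_def
    have hsM : MeasurableSet s := hA (measurableSet_singleton a)
    have htM : MeasurableSet t := hB (measurableSet_singleton b)
    have huM : MeasurableSet u := hZ (measurableSet_singleton z)
    have huM' : MeasurableSet[MeasurableSpace.comap Z inferInstance] u := ⟨{z}, measurableSet_singleton z, rfl⟩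
    by_cases hu0 : μ u = 0
    · have h1 : μ (s ∩ t ∩ u) = 0 := measure_mono_null Set.inter_subset_right hu0
      have h2 : μ (s ∩ u) = 0 := measure_mono_null Set.inter_subset_right hu0
      rw [h1, h2, hu0]
      simp
    · obtain ⟨ω₀, hω₀⟩ : u.Nonempty := by
        rw [Set.nonempty_iff_ne_empty]
        intro hemp
        exact hu0 (hemp ▸ measure_empty)
      have hconst : ∀ (f : Ω → ℝ), StronglyMeasurable[MeasurableSpace.comap Z inferInstance] f → ∀ ω ∈ u, f ω = f ω₀ := by
        intro f hf ω hω
        have hmv : MeasurableSet[MeasurableSpace.comap Z inferInstance] (f ⁻¹' {f ω₀}) :=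
          hf.measurable (measurableSet_singleton _)
        obtain ⟨w, -, hw⟩ := MeasurableSpace.measurableSet_comap.mp hmv
        have hω₀w : ω₀ ∈ Z ⁻¹' w := by
          rw [hw]; exact rfl
        have hzz : Z ω = Z ω₀ := by
          have h1 : Z ω = z := hω
          have h2 : Z ω₀ = z := hω₀
          rw [h1, h2]
        have hmem : ω ∈ Z ⁻¹' w := by
          show Z ω ∈ w
          rw [hzz]; exact hω₀w
        rw [hw] at hmem
        exact hmem
      have hint : ∀ (v : Set Ω), MeasurableSet v →
          ∫ x in u, (μ⟦v | MeasurableSpace.comap Z inferInstance⟧) x ∂μ = (μ (v ∩ u)).toReal := by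
        intro v hv
        rw [setIntegral_condExp hle ((integrable_const (1:ℝ)).indicator hv) huM']
        rw [setIntegral_indicator hv]
        rw [setIntegral_const]
        rw [Set.inter_comm]
        simp
        rfl
      have hval : ∀ (v : Set Ω), MeasurableSet v →
          (μ⟦v | MeasurableSpace.comap Z inferInstance⟧) ω₀ * (μ u).toReal = (μ (v ∩ u)).toReal := by
        intro v hv
        have hc := hconst (μ⟦v | MeasurableSpace.comap Z inferInstance⟧) stronglyMeasurable_condExp
        have h1 : ∫ x in u, (μ⟦v | MeasurableSpace.comap Z inferInstance⟧) x ∂μ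
            = (μ u).toReal * (μ⟦v | MeasurableSpace.comap Z inferInstance⟧) ω₀ := by
          rw [setIntegral_congr_fun huM (fun ω hω => hc ω hω), setIntegral_const,
            smul_eq_mul]
          simp only [Measure.real]
        have h2 := hint v hv
        rw [h1] at h2
        linarith
      have hprod := (condIndepFun_iff_condExp_inter_preimage_eq_mul hA hB).mp h {a} {b}
        (measurableSet_singleton a) (measurableSet_singleton b)
      have hint2 : (μ (s ∩ t ∩ u)).toReal
          = ((μ⟦s | MeasurableSpace.comap Z inferInstance⟧) ω₀ * (μ⟦t | MeasurableSpace.comap Z inferInstance⟧) ω₀) * (μ u).toReal := by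
        rw [← hint _ (hsM.inter htM)]
        rw [setIntegral_congr_ae huM (hprod.mono fun ω hω _ => hω)]
        have hcs := hconst (μ⟦s | MeasurableSpace.comap Z inferInstance⟧) stronglyMeasurable_condExp
        have hct := hconst (μ⟦t | MeasurableSpace.comap Z inferInstance⟧) stronglyMeasurable_condExp
        rw [setIntegral_congr_fun huM
          (g := fun _ => (μ⟦s | MeasurableSpace.comap Z inferInstance⟧) ω₀ * (μ⟦t | MeasurableSpace.comap Z inferInstance⟧) ω₀)
          (fun ω hω => by rw [hcs ω hω, hct ω hω]), setIntegral_const, smul_eq_mul]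
        simp only [Measure.real]
        ring
      rw [hint2, ← hval s hsM, ← hval t htM]
      ring
  -- Step 2: entropy computation
  have hsM : ∀ a : α, MeasurableSet (A ⁻¹' {a}) := fun a => hA (measurableSet_singleton a)
  have htM : ∀ b : β, MeasurableSet (B ⁻¹' {b}) := fun b => hB (measurableSet_singleton b)
  have huMz : ∀ z : γ, MeasurableSet (Z ⁻¹' {z}) := fun z => hZ (measurableSet_singleton z)
  have halg := sum_negMulLog_factorization
    (fun a b z => (μ (A ⁻¹' {a} ∩ B ⁻¹' {b} ∩ Z ⁻¹' {z})).toReal)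
    (fun a z => (μ (A ⁻¹' {a} ∩ Z ⁻¹' {z})).toReal)
    (fun b z => (μ (B ⁻¹' {b} ∩ Z ⁻¹' {z})).toReal)
    (fun z => (μ (Z ⁻¹' {z})).toReal)
    (fun a b z => ENNReal.toReal_nonneg)
    (fun a z => by
      rw [measure_toReal_sum_fiber μ B hB ((hsM a).inter (huMz z))]
      refine Finset.sum_congr rfl fun b _ => ?_
      rw [Set.inter_left_comm, ← Set.inter_assoc])
    (fun b z => by
      rw [measure_toReal_sum_fiber μ A hA ((htM b).inter (huMz z))]
      refine Finset.sum_congr rfl fun a _ => ?_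
      rw [← Set.inter_assoc])
    (fun z => by
      rw [measure_toReal_sum_fiber μ A hA (huMz z)])
    key
  rw [condMutualInfo_eq', entropy_pair_eq μ A Z hA hZ, entropy_pair_eq μ B Z hB hZ,
    entropy_triple_eq μ A B Z hA hB hZ, entropy_eq_sum_preimage μ Z hZ]
  linarith

end CondIndep

/-- Converse step of Theorem 3 (coupled relays): for `2 ≤ k ≤ K - 1`, if
`(X_{k-1}, X_k) – (Y_{k+1}, X_{k+1}^K) – Y_{k+2}^{K+1}` and
`X_0^{k-2} – (Y_{K+1}, X_{k-1}^K) – Y_{k+1}^K` are Markov chains, then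
`I(X_0^k ; Y_{k+1}^{K+1} | X_{k+1}^K)
  = I((X_{k-1}, X_k) ; Y_{k+1} | X_{k+1}^K) + I(X_0^{k-2} ; Y_{K+1} | X_{k-1}^K)`. -/
theorem cutset_reduction_coupled_relays
    {Ω : Type*} [MeasurableSpace Ω] [StandardBorelSpace Ω]
    {S T : ℕ → Type*}
    [∀ i, MeasurableSpace (S i)] [∀ i, Fintype (S i)] [∀ i, Nonempty (S i)]
    [∀ i, DiscreteMeasurableSpace (S i)]
    [∀ i, MeasurableSpace (T i)] [∀ i, Fintype (T i)] [∀ i, Nonempty (T i)]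
    [∀ i, DiscreteMeasurableSpace (T i)]
    (μ : Measure Ω) [IsProbabilityMeasure μ]
    (K k : ℕ) (hK : 3 ≤ K) (hk1 : 2 ≤ k) (hk2 : k ≤ K - 1)
    (X : ∀ i, Ω → S i) (Y : ∀ i, Ω → T i)
    (hX : ∀ i, Measurable (X i)) (hY : ∀ i, Measurable (Y i))
    (hMarkov1 : CondIndepFun
      (MeasurableSpace.comap
        (fun ω => (Y (k + 1) ω, tuple X (k + 1) K ω)) inferInstance)
      (Measurable.comap_le (show Measurable (fun ω => (Y (k + 1) ω, tuple X (k + 1) K ω)) from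
        (hY (k + 1)).prodMk (measurable_pi_lambda _ (fun l => hX l))))
      (fun ω => (X (k - 1) ω, X k ω)) (tuple Y (k + 2) (K + 1)) μ)
    (hMarkov2 : CondIndepFun
      (MeasurableSpace.comap
        (fun ω => (Y (K + 1) ω, tuple X (k - 1) K ω)) inferInstance)
      (Measurable.comap_le (show Measurable (fun ω => (Y (K + 1) ω, tuple X (k - 1) K ω)) from
        (hY (K + 1)).prodMk (measurable_pi_lambda _ (fun l => hX l))))
      (tuple X 0 (k - 2)) (tuple Y (k + 1) K) μ) :
    condMutualInfo μ (tuple X 0 k) (tuple Y (k + 1) (K + 1)) (tuple X (k + 1) K)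
      = condMutualInfo μ (fun ω => (X (k - 1) ω, X k ω)) (Y (k + 1)) (tuple X (k + 1) K)
        + condMutualInfo μ (tuple X 0 (k - 2)) (Y (K + 1)) (tuple X (k - 1) K) := by
  have hkK : k ≤ K := by omega
  -- measurability of all the tuples involved
  have hX0k : Measurable (tuple X 0 k) := measurable_pi_lambda _ fun l => hX _
  have hA : Measurable (tuple X 0 (k - 2)) := measurable_pi_lambda _ fun l => hX _
  have hC : Measurable (tuple X (k + 1) K) := measurable_pi_lambda _ fun l => hX _
  have hBC : Measurable (tuple X (k - 1) K) := measurable_pi_lambda _ fun l => hX _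
  have hYall : Measurable (tuple Y (k + 1) (K + 1)) := measurable_pi_lambda _ fun l => hY _
  have hV : Measurable (tuple Y (k + 2) (K + 1)) := measurable_pi_lambda _ fun l => hY _
  have hY2 : Measurable (tuple Y (k + 1) K) := measurable_pi_lambda _ fun l => hY _
  have hB : Measurable (fun ω => (X (k - 1) ω, X k ω)) := (hX _).prodMk (hX _)
  -- the recoding maps
  let e0 : (∀ l : Set.Icc 0 k, S l) → (∀ l : Set.Icc 0 (k - 2), S l) × (S (k - 1) × S k) :=
    fun p => (fun l => p ⟨l.1, by
        have h := Set.mem_Icc.mp l.2; exact Set.mem_Icc.mpr ⟨by omega, by omega⟩⟩,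
      (p ⟨k - 1, Set.mem_Icc.mpr ⟨by omega, by omega⟩⟩,
       p ⟨k, Set.mem_Icc.mpr ⟨by omega, by omega⟩⟩))
  have he0 : Function.Injective e0 := by
    intro p q hpq
    have h1 := congrArg Prod.fst hpq
    have h2 := congrArg (fun x => x.2.1) hpq
    have h3 := congrArg (fun x => x.2.2) hpq
    funext l
    obtain ⟨l, hl⟩ := l
    have hlm := Set.mem_Icc.mp hl
    rcases (show l ≤ k - 2 ∨ l = k - 1 ∨ l = k by omega) with hc | hc | hc
    · exact congrFun h1 ⟨l, Set.mem_Icc.mpr ⟨by omega, hc⟩⟩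
    · subst hc; exact h2
    · subst hc; exact h3
  let e1 : (∀ l : Set.Icc (k + 1) (K + 1), T l) →
      T (k + 1) × (∀ l : Set.Icc (k + 2) (K + 1), T l) :=
    fun p => (p ⟨k + 1, Set.mem_Icc.mpr ⟨by omega, by omega⟩⟩,
      fun l => p ⟨l.1, by
        have h := Set.mem_Icc.mp l.2; exact Set.mem_Icc.mpr ⟨by omega, by omega⟩⟩)
  have he1 : Function.Injective e1 := by
    intro p q hpq
    have h1 := congrArg Prod.fst hpq
    have h2 := congrArg Prod.snd hpq
    funext l
    obtain ⟨l, hl⟩ := l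
    have hlm := Set.mem_Icc.mp hl
    rcases (show l = k + 1 ∨ (k + 2 ≤ l ∧ l ≤ K + 1) by omega) with hc | hc
    · subst hc; exact h1
    · exact congrFun h2 ⟨l, Set.mem_Icc.mpr ⟨hc.1, hc.2⟩⟩
  let e2 : (∀ l : Set.Icc (k + 1) (K + 1), T l) →
      T (K + 1) × (∀ l : Set.Icc (k + 1) K, T l) :=
    fun p => (p ⟨K + 1, Set.mem_Icc.mpr ⟨by omega, by omega⟩⟩,
      fun l => p ⟨l.1, by
        have h := Set.mem_Icc.mp l.2; exact Set.mem_Icc.mpr ⟨by omega, by omega⟩⟩)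
  have he2 : Function.Injective e2 := by
    intro p q hpq
    have h1 := congrArg Prod.fst hpq
    have h2 := congrArg Prod.snd hpq
    funext l
    obtain ⟨l, hl⟩ := l
    have hlm := Set.mem_Icc.mp hl
    rcases (show l = K + 1 ∨ (k + 1 ≤ l ∧ l ≤ K) by omega) with hc | hc
    · subst hc; exact h1
    · exact congrFun h2 ⟨l, Set.mem_Icc.mpr ⟨hc.1, hc.2⟩⟩
  let e3 : (∀ l : Set.Icc (k - 1) K, S l) →
      (S (k - 1) × S k) × (∀ l : Set.Icc (k + 1) K, S l) :=
    fun p => ((p ⟨k - 1, Set.mem_Icc.mpr ⟨by omega, by omega⟩⟩,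
        p ⟨k, Set.mem_Icc.mpr ⟨by omega, by omega⟩⟩),
      fun l => p ⟨l.1, by
        have h := Set.mem_Icc.mp l.2; exact Set.mem_Icc.mpr ⟨by omega, by omega⟩⟩)
  have he3 : Function.Injective e3 := by
    intro p q hpq
    have h1 := congrArg (fun x => x.1.1) hpq
    have h2 := congrArg (fun x => x.1.2) hpq
    have h3 := congrArg Prod.snd hpq
    funext l
    obtain ⟨l, hl⟩ := l
    have hlm := Set.mem_Icc.mp hl
    rcases (show l = k - 1 ∨ l = k ∨ (k + 1 ≤ l ∧ l ≤ K) by omega) with hc | hc | hc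
    · subst hc; exact h1
    · subst hc; exact h2
    · exact congrFun h3 ⟨l, Set.mem_Icc.mpr ⟨hc.1, hc.2⟩⟩
  -- first Markov chain kills I(B ; V | U, C)
  have hzero1 : condMutualInfo μ (fun ω => (X (k - 1) ω, X k ω)) (tuple Y (k + 2) (K + 1))
      (fun ω => (Y (k + 1) ω, tuple X (k + 1) K ω)) = 0 :=
    cmi_eq_zero_of_condIndep μ _ _ _ hB hV ((hY (k + 1)).prodMk hC) _ hMarkov1
  -- second Markov chain kills I(A ; Y' | W, BC)
  have hzero2 : condMutualInfo μ (tuple X 0 (k - 2)) (tuple Y (k + 1) K)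
      (fun ω => (Y (K + 1) ω, tuple X (k - 1) K ω)) = 0 :=
    cmi_eq_zero_of_condIndep μ _ _ _ hA hY2 ((hY (K + 1)).prodMk hBC) _ hMarkov2
  -- first RHS term
  have hterm1 : condMutualInfo μ (fun ω => (X (k - 1) ω, X k ω)) (tuple Y (k + 1) (K + 1))
        (tuple X (k + 1) K)
      = condMutualInfo μ (fun ω => (X (k - 1) ω, X k ω)) (Y (k + 1)) (tuple X (k + 1) K) := by
    calc condMutualInfo μ (fun ω => (X (k - 1) ω, X k ω)) (tuple Y (k + 1) (K + 1))
          (tuple X (k + 1) K)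
        = condMutualInfo μ (fun ω => (X (k - 1) ω, X k ω))
            (fun ω => (Y (k + 1) ω, tuple Y (k + 2) (K + 1) ω)) (tuple X (k + 1) K) :=
          (cmi_comp_snd μ _ (tuple Y (k + 1) (K + 1)) _ (tuple X (k + 1) K)
            hB hYall hC e1 he1 rfl).symm
      _ = condMutualInfo μ (fun ω => (X (k - 1) ω, X k ω)) (Y (k + 1)) (tuple X (k + 1) K)
          + condMutualInfo μ (fun ω => (X (k - 1) ω, X k ω)) (tuple Y (k + 2) (K + 1))
              (fun ω => (Y (k + 1) ω, tuple X (k + 1) K ω)) :=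
          cmi_chain_snd μ _ _ _ _ hB (hY (k + 1)) hV hC
      _ = condMutualInfo μ (fun ω => (X (k - 1) ω, X k ω)) (Y (k + 1)) (tuple X (k + 1) K) := by
          rw [hzero1, add_zero]
  -- second RHS term
  have hterm2 : condMutualInfo μ (tuple X 0 (k - 2)) (tuple Y (k + 1) (K + 1))
        (fun ω => ((X (k - 1) ω, X k ω), tuple X (k + 1) K ω))
      = condMutualInfo μ (tuple X 0 (k - 2)) (Y (K + 1)) (tuple X (k - 1) K) := by
    have hBCpair : Measurable (fun ω => ((X (k - 1) ω, X k ω), tuple X (k + 1) K ω)) :=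
      hB.prodMk hC
    calc condMutualInfo μ (tuple X 0 (k - 2)) (tuple Y (k + 1) (K + 1))
          (fun ω => ((X (k - 1) ω, X k ω), tuple X (k + 1) K ω))
        = condMutualInfo μ (tuple X 0 (k - 2))
            (fun ω => (Y (K + 1) ω, tuple Y (k + 1) K ω))
            (fun ω => ((X (k - 1) ω, X k ω), tuple X (k + 1) K ω)) :=
          (cmi_comp_snd μ _ (tuple Y (k + 1) (K + 1)) _ _
            hA hYall hBCpair e2 he2 rfl).symm
      _ = condMutualInfo μ (tuple X 0 (k - 2)) (Y (K + 1))
            (fun ω => ((X (k - 1) ω, X k ω), tuple X (k + 1) K ω))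
          + condMutualInfo μ (tuple X 0 (k - 2)) (tuple Y (k + 1) K)
              (fun ω => (Y (K + 1) ω, ((X (k - 1) ω, X k ω), tuple X (k + 1) K ω))) :=
          cmi_chain_snd μ _ _ _ _ hA (hY (K + 1)) hY2 hBCpair
      _ = condMutualInfo μ (tuple X 0 (k - 2)) (Y (K + 1)) (tuple X (k - 1) K)
          + condMutualInfo μ (tuple X 0 (k - 2)) (tuple Y (k + 1) K)
              (fun ω => (Y (K + 1) ω, tuple X (k - 1) K ω)) := by
          have c1 : condMutualInfo μ (tuple X 0 (k - 2)) (Y (K + 1))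
                (fun ω => ((X (k - 1) ω, X k ω), tuple X (k + 1) K ω))
              = condMutualInfo μ (tuple X 0 (k - 2)) (Y (K + 1)) (tuple X (k - 1) K) :=
            cmi_comp_cond μ _ _ (tuple X (k - 1) K) _ hA (hY (K + 1)) hBC e3 he3 rfl
          have c2 : condMutualInfo μ (tuple X 0 (k - 2)) (tuple Y (k + 1) K)
                (fun ω => (Y (K + 1) ω, ((X (k - 1) ω, X k ω), tuple X (k + 1) K ω)))
              = condMutualInfo μ (tuple X 0 (k - 2)) (tuple Y (k + 1) K)
                  (fun ω => (Y (K + 1) ω, tuple X (k - 1) K ω)) :=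
            cmi_comp_cond μ _ _ (fun ω => (Y (K + 1) ω, tuple X (k - 1) K ω)) _
              hA hY2 ((hY (K + 1)).prodMk hBC) (Prod.map id e3)
              (Function.injective_id.prodMap he3) rfl
          rw [c1, c2]
      _ = condMutualInfo μ (tuple X 0 (k - 2)) (Y (K + 1)) (tuple X (k - 1) K) := by
          rw [hzero2, add_zero]
  -- assemble
  calc condMutualInfo μ (tuple X 0 k) (tuple Y (k + 1) (K + 1)) (tuple X (k + 1) K)
      = condMutualInfo μ (fun ω => (tuple X 0 (k - 2) ω, (X (k - 1) ω, X k ω)))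
          (tuple Y (k + 1) (K + 1)) (tuple X (k + 1) K) :=
        (cmi_comp_fst μ (tuple X 0 k) _ (tuple Y (k + 1) (K + 1)) (tuple X (k + 1) K)
          hX0k hYall hC e0 he0 rfl).symm
    _ = condMutualInfo μ (fun ω => (X (k - 1) ω, X k ω)) (tuple Y (k + 1) (K + 1))
          (tuple X (k + 1) K)
        + condMutualInfo μ (tuple X 0 (k - 2)) (tuple Y (k + 1) (K + 1))
            (fun ω => ((X (k - 1) ω, X k ω), tuple X (k + 1) K ω)) :=
        cmi_chain_fst μ _ _ _ _ hA hB hYall hC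
    _ = condMutualInfo μ (fun ω => (X (k - 1) ω, X k ω)) (Y (k + 1)) (tuple X (k + 1) K)
        + condMutualInfo μ (tuple X 0 (k - 2)) (Y (K + 1)) (tuple X (k - 1) K) := by
        rw [hterm1, hterm2]
end
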